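/- arXiv:1903.00147 — 4 statements merged into one kernel-verified Lean document; each statement's English description precedes it below -/
import Mathlib

section
/- Let f and g be pdfs on ℝⁿ with f, g ∈ C₀(ℝⁿ). Then for every ε > 0 there exists a finite mixture h = Σᵢ₌₁ᵐ cᵢ σᵢ⁻ⁿ g((x − μᵢ)/σᵢ) with μᵢ ∈ ℝⁿ, σᵢ > 0, cᵢ ≥ 0, Σ cᵢ = 1, such that ‖f − h‖_∞ < ε. -/
open MeasureTheory Filter Metric Topology Set

private lemma tail_lemma {n : ℕ} {φ : EuclideanSpace ℝ (Fin n) → ℝ}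
    (h0 : ∀ x, 0 ≤ φ x) (hint : Integrable φ) {τ : ℝ} (hτ : 0 < τ) :
    ∃ R : ℝ, 0 < R ∧ ∫ x in (Metric.closedBall (0:EuclideanSpace ℝ (Fin n)) R)ᶜ, φ x < τ := by
  have hU : ⋃ k : ℕ, Metric.closedBall (0:EuclideanSpace ℝ (Fin n)) (k:ℝ) = univ := by
    ext x
    simp only [mem_iUnion, mem_closedBall, dist_zero_right, mem_univ, iff_true]
    obtain ⟨k, hk⟩ := exists_nat_ge ‖x‖
    exact ⟨k, hk⟩
  have ht := tendsto_setIntegral_of_monotone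
    (s := fun k : ℕ => Metric.closedBall (0:EuclideanSpace ℝ (Fin n)) (k:ℝ))
    (fun k => measurableSet_closedBall)
    (fun a b hab => Metric.closedBall_subset_closedBall (by exact_mod_cast hab))
    (by rw [hU]; exact hint.integrableOn)
  rw [hU, setIntegral_univ] at ht
  have := Metric.tendsto_nhds.mp ht τ hτ
  obtain ⟨k, hk⟩ := this.exists
  refine ⟨(k:ℝ) + 1, by positivity, ?_⟩
  have hcompl : ∀ m : ℝ, ∫ x in (Metric.closedBall (0:EuclideanSpace ℝ (Fin n)) m)ᶜ, φ x
      = (∫ x, φ x) - ∫ x in Metric.closedBall (0:EuclideanSpace ℝ (Fin n)) m, φ x := by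
    intro m
    have := integral_add_compl (measurableSet_closedBall
      (x := (0:EuclideanSpace ℝ (Fin n))) (ε := m)) hint
    linarith
  have hmono : ∫ x in Metric.closedBall (0:EuclideanSpace ℝ (Fin n)) (k:ℝ), φ x
      ≤ ∫ x in Metric.closedBall (0:EuclideanSpace ℝ (Fin n)) ((k:ℝ)+1), φ x := by
    apply setIntegral_mono_set hint.integrableOn
    · exact Filter.Eventually.of_forall fun x => h0 x
    · exact (Metric.closedBall_subset_closedBall (by linarith)).eventuallyLE
  have hle : ∫ x in Metric.closedBall (0:EuclideanSpace ℝ (Fin n)) (k:ℝ), φ x ≤ ∫ x, φ x :=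
    setIntegral_le_integral hint (Filter.Eventually.of_forall fun x => h0 x)
  rw [Real.dist_eq, abs_sub_lt_iff] at hk
  rw [hcompl]
  linarith [hk.2]

private lemma bdd_of_c0 {n : ℕ} {φ : EuclideanSpace ℝ (Fin n) → ℝ} (hc : Continuous φ)
    (h0 : Tendsto φ (cocompact (EuclideanSpace ℝ (Fin n))) (𝓝 0)) :
    ∃ C : ℝ, 0 ≤ C ∧ ∀ x, |φ x| ≤ C := by
  have h1 : ∀ᶠ x in cocompact (EuclideanSpace ℝ (Fin n)), |φ x| < 1 := by
    have := Metric.tendsto_nhds.mp h0 1 one_pos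
    simpa [Real.dist_eq] using this
  obtain ⟨K, hK, hKsub⟩ := mem_cocompact.mp h1
  obtain ⟨C, hC⟩ := hK.exists_bound_of_continuousOn hc.continuousOn
  refine ⟨max C 1, le_max_of_le_right zero_le_one, fun x => ?_⟩
  by_cases hx : x ∈ K
  · exact le_max_of_le_left (by simpa using hC x hx)
  · exact le_max_of_le_right (le_of_lt (hKsub hx))

private lemma subst_lemma {n : ℕ} (Φ : EuclideanSpace ℝ (Fin n) → ℝ) (x : EuclideanSpace ℝ (Fin n))
    {σ₀ : ℝ} (hσ : 0 < σ₀) :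
    ∫ w, Φ (x - σ₀ • w) = (σ₀ ^ n)⁻¹ * ∫ y, Φ y := by
  have h := Measure.integral_comp_smul (μ := volume) (fun u => Φ (x - u)) σ₀
  rw [finrank_euclideanSpace_fin] at h
  rw [h, integral_sub_left_eq_self (fun u => Φ u) volume x, smul_eq_mul,
    abs_of_nonneg (by positivity)]

private lemma scale_int {n : ℕ} (g : EuclideanSpace ℝ (Fin n) → ℝ) {σ₀ : ℝ} (hσ : 0 < σ₀) :
    ∫ u, g (σ₀⁻¹ • u) = σ₀ ^ n * ∫ y, g y := by
  have h := Measure.integral_comp_smul (μ := volume) g σ₀⁻¹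
  rw [finrank_euclideanSpace_fin] at h
  rw [h, smul_eq_mul, ← inv_pow, inv_inv, abs_of_nonneg (by positivity)]

private lemma abs_integral_le {n : ℕ} (F : EuclideanSpace ℝ (Fin n) → ℝ)
    (ν : MeasureTheory.Measure (EuclideanSpace ℝ (Fin n))) :
    |∫ y, F y ∂ν| ≤ ∫ y, |F y| ∂ν := by
  simpa [Real.norm_eq_abs] using norm_integral_le_integral_norm (μ := ν) F

set_option maxHeartbeats 1600000 in
/-- Theorem (a): if `f, g` are pdfs in `C₀(ℝⁿ)`, then for every `ε > 0` there is a finite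
location-scale mixture of `g` within `ε` of `f` in uniform norm. -/
theorem stmt_5 (n : ℕ) (f g : EuclideanSpace ℝ (Fin n) → ℝ)
    (hf0 : ∀ x, 0 ≤ f x) (hfint : Integrable f) (hf1 : ∫ x, f x = 1)
    (hfc : Continuous f)
    (hfC0 : Tendsto f (cocompact (EuclideanSpace ℝ (Fin n))) (𝓝 0))
    (hg0 : ∀ x, 0 ≤ g x) (hgint : Integrable g) (hg1 : ∫ x, g x = 1)
    (hgc : Continuous g)
    (hgC0 : Tendsto g (cocompact (EuclideanSpace ℝ (Fin n))) (𝓝 0))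
    (ε : ℝ) (hε : 0 < ε) :
    ∃ (m : ℕ) (c : Fin m → ℝ) (μ : Fin m → EuclideanSpace ℝ (Fin n)) (σ : Fin m → ℝ),
      (∀ i, 0 < σ i) ∧ (∀ i, 0 ≤ c i) ∧ (∑ i, c i = 1) ∧
      eLpNorm (fun x =>
          f x - ∑ i, c i * ((σ i) ^ n)⁻¹ * g ((σ i)⁻¹ • (x - μ i))) ⊤ volume
        < ENNReal.ofReal ε := by
  classical
  obtain ⟨Cf, hCf0, hCf⟩ := bdd_of_c0 hfc hfC0
  obtain ⟨Cg, hCg0, hCg⟩ := bdd_of_c0 hgc hgC0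
  have hfu : UniformContinuous f := hfc.uniformContinuous_of_tendsto_cocompact hfC0
  have hgu : UniformContinuous g := hgc.uniformContinuous_of_tendsto_cocompact hgC0
  obtain ⟨r, hr, hfr⟩ := Metric.uniformContinuous_iff.mp hfu (ε/8) (by positivity)
  obtain ⟨R, hR, hgR⟩ := tail_lemma hg0 hgint (τ := ε/(16*(Cf+1))) (by positivity)
  set σ₀ : ℝ := r/(2*R) with hσ₀def
  have hσ₀ : 0 < σ₀ := by rw [hσ₀def]; positivity
  obtain ⟨δg, hδgpos, hgδ⟩ := Metric.uniformContinuous_iff.mp hgu (ε/8 * σ₀^n) (by positivity)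
  set ρ : ℝ := σ₀*δg/2 with hρdef
  have hρ : 0 < ρ := by rw [hρdef]; positivity
  set Q : ℝ := (σ₀^n)⁻¹ with hQdef
  have hQ0 : 0 < Q := by rw [hQdef]; positivity
  set δ' : ℝ := ε/(8*(Cg+1)*(Q+1)) with hδ'def
  have hδ'pos : 0 < δ' := by rw [hδ'def]; positivity
  have hδ'id : δ' * ((Cg+1)*(Q+1)) = ε/8 := by
    rw [hδ'def]; field_simp
  obtain ⟨N, hN, hfN⟩ := tail_lemma hf0 hfint hδ'pos
  set K := Metric.closedBall (0:EuclideanSpace ℝ (Fin n)) N with hKdef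
  obtain ⟨s, hs⟩ := (isCompact_closedBall (0:EuclideanSpace ℝ (Fin n)) N).elim_finite_subcover
    (fun q => Metric.ball q ρ) (fun _ => isOpen_ball)
    (fun y _ => mem_iUnion.mpr ⟨y, mem_ball_self hρ⟩)
  set L := s.toList with hLdef
  set M := L.length with hMdef
  set p : ℕ → EuclideanSpace ℝ (Fin n) := fun k => L.getD k 0 with hpdef
  set B : ℕ → Set (EuclideanSpace ℝ (Fin n)) :=
    fun k => if k < M then Metric.ball (p k) ρ ∩ K else ∅ with hBdef
  set A := disjointed B with hAdef
  have hBmeas : ∀ k, MeasurableSet (B k) := by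
    intro k; rw [hBdef]; dsimp only; split_ifs
    · exact measurableSet_ball.inter measurableSet_closedBall
    · exact MeasurableSet.empty
  have hAmeas : ∀ k, MeasurableSet (A k) := fun k => MeasurableSet.disjointed hBmeas k
  have hAsub : ∀ k, A k ⊆ B k := disjointed_subset B
  have hAdisj : Pairwise (Function.onFun Disjoint A) := disjoint_disjointed B
  have hKB : K ⊆ ⋃ k, B k := by
    intro y hy
    obtain ⟨q, hqs, hyq⟩ := mem_iUnion₂.mp (hs hy)
    have hqL : q ∈ L := by rw [hLdef]; exact Finset.mem_toList.mpr hqs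
    obtain ⟨k, hk, hkq⟩ := List.mem_iff_getElem.mp hqL
    refine mem_iUnion.mpr ⟨k, ?_⟩
    have hkM : k < M := by rw [hMdef]; exact hk
    rw [hBdef]; dsimp only
    rw [if_pos hkM]
    refine ⟨?_, hy⟩
    have hpk : p k = q := by
      rw [hpdef]; dsimp only
      rw [List.getD_eq_getElem L 0 hk, hkq]
    rw [hpk]; exact hyq
  set U := ⋃ i : Fin M, A (i : ℕ) with hUdef
  have hKU : K ⊆ U := by
    intro y hy
    have hy2 : y ∈ ⋃ k, A k := by
      rw [hAdef, iUnion_disjointed]; exact hKB hy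
    obtain ⟨k, hk⟩ := mem_iUnion.mp hy2
    have hkM : k < M := by
      by_contra h
      have hsub := hAsub k
      have hBk : B k = ∅ := by rw [hBdef]; dsimp only; rw [if_neg h]
      rw [hBk] at hsub
      exact absurd (hsub hk) (notMem_empty _)
    exact mem_iUnion.mpr ⟨⟨k, hkM⟩, hk⟩
  have hUmeas : MeasurableSet U := MeasurableSet.iUnion fun i => hAmeas i
  set c : Fin M → ℝ := fun i => ∫ y in A (i : ℕ), f y with hcdef
  have hc0 : ∀ i, 0 ≤ c i := fun i => setIntegral_nonneg (hAmeas i) (fun y _ => hf0 y)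
  have hpdisj : Pairwise (Function.onFun Disjoint fun i : Fin M => A (i : ℕ)) :=
    fun i j hij => hAdisj (fun e => hij (Fin.val_injective e))
  have hcsum : ∑ i, c i = ∫ y in U, f y := by
    rw [hUdef]
    exact (integral_iUnion_fintype (s := fun i : Fin M => A (i:ℕ)) (fun i => hAmeas i) hpdisj
      (fun i => hfint.integrableOn)).symm
  set t := 1 - ∑ i, c i with htdef
  have htc : t = ∫ y in Uᶜ, f y := by
    have h := integral_add_compl hUmeas hfint
    rw [hf1] at h; rw [htdef, hcsum]; linarith
  have ht0 : 0 ≤ t := by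
    rw [htc]; exact setIntegral_nonneg hUmeas.compl (fun y _ => hf0 y)
  have htδ : t ≤ δ' := by
    rw [htc]
    calc ∫ y in Uᶜ, f y ≤ ∫ y in Kᶜ, f y :=
          setIntegral_mono_set hfint.integrableOn
            (Filter.Eventually.of_forall hf0)
            ((compl_subset_compl.mpr hKU).eventuallyLE)
      _ ≤ δ' := le_of_lt hfN
  have hcle1 : ∑ i, c i ≤ 1 := by rw [htdef] at ht0; linarith
  refine ⟨M + 1, Fin.snoc c t, Fin.snoc (fun i : Fin M => p (i : ℕ)) 0,
    Fin.snoc (fun _ => σ₀) 1, ?_, ?_, ?_, ?_⟩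
  · intro i
    refine Fin.lastCases ?_ (fun j => ?_) i
    · simp
    · simpa using hσ₀
  · intro i
    refine Fin.lastCases ?_ (fun j => ?_) i
    · simpa using ht0
    · simpa using hc0 j
  · rw [Fin.sum_univ_castSucc]
    simp only [Fin.snoc_castSucc, Fin.snoc_last]
    rw [htdef]; ring
  · -- main estimate
    have key : ∀ x, ‖f x - (∑ i : Fin M, c i * (σ₀^n)⁻¹ * g (σ₀⁻¹ • (x - p (i:ℕ))) + t * g x)‖
        ≤ 5/8*ε := by
      intro x
      have hconst : Continuous fun w : EuclideanSpace ℝ (Fin n) => x - σ₀ • w :=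
        continuous_const.sub (continuous_id.const_smul σ₀)
      set I : EuclideanSpace ℝ (Fin n) → ℝ := fun y => (σ₀^n)⁻¹ * g (σ₀⁻¹ • (x - y)) with hIdef
      have hI0 : ∀ y, 0 ≤ I y := fun y => mul_nonneg (by positivity) (hg0 _)
      have hIbd : ∀ y, I y ≤ Q * Cg := by
        intro y
        simp only [hIdef, hQdef]
        exact mul_le_mul_of_nonneg_left ((le_abs_self _).trans (hCg _)) (by positivity)
      have hIint : Integrable I := by
        simp only [hIdef]
        exact (((integrable_comp_smul_iff volume g (inv_ne_zero hσ₀.ne')).mpr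
          hgint).comp_sub_left x).const_mul _
      have hI1 : ∫ y, I y = 1 := by
        simp only [hIdef]
        rw [integral_const_mul]
        have h2 : ∫ y, g (σ₀⁻¹ • (x - y)) = ∫ u, g (σ₀⁻¹ • u) :=
          integral_sub_left_eq_self (fun u => g (σ₀⁻¹ • u)) volume x
        rw [h2, scale_int g hσ₀, hg1, mul_one]
        field_simp
      have hfI : Integrable (fun y => f y * I y) := by
        refine Integrable.bdd_mul (c := Cf) hIint hfc.aestronglyMeasurable (Filter.Eventually.of_forall fun y => ?_)
        rw [Real.norm_eq_abs]; exact hCf y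
      have habs1 : Continuous fun w => |f x - f (x - σ₀ • w)| :=
        (continuous_const.sub (hfc.comp hconst)).abs
      -- T1 : smoothing error
      have hT1 : |∫ y, (f x - f y) * I y| ≤ ε/4 := by
        have hstep1 : |∫ y, (f x - f y) * I y| ≤ ∫ y, |f x - f y| * I y := by
          calc |∫ y, (f x - f y) * I y| ≤ ∫ y, |(f x - f y) * I y| :=
                abs_integral_le _ _
            _ = ∫ y, |f x - f y| * I y := by
                congr 1; funext y
                rw [abs_mul, abs_of_nonneg (hI0 y)]
        have hchange : ∫ y, |f x - f y| * I y = ∫ w, |f x - f (x - σ₀ • w)| * g w := by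
          have h1 := subst_lemma (fun y => |f x - f y| * I y) x hσ₀
          beta_reduce at h1
          have h3 : ∫ w, |f x - f (x - σ₀ • w)| * I (x - σ₀ • w)
              = (σ₀^n)⁻¹ * ∫ w, |f x - f (x - σ₀ • w)| * g w := by
            rw [← integral_const_mul]
            congr 1; funext w
            simp only [hIdef]
            rw [sub_sub_cancel, inv_smul_smul₀ hσ₀.ne']
            ring
          rw [h3] at h1
          have hne : ((σ₀:ℝ)^n)⁻¹ ≠ 0 := by positivity
          exact (mul_left_cancel₀ hne h1).symm
        have hintL : Integrable fun w => |f x - f (x - σ₀ • w)| * g w := by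
          refine Integrable.bdd_mul (c := 2*Cf) hgint habs1.aestronglyMeasurable (Filter.Eventually.of_forall fun w => ?_)
          rw [Real.norm_eq_abs, abs_abs]
          calc |f x - f (x - σ₀ • w)| ≤ |f x| + |f (x - σ₀ • w)| := abs_sub _ _
            _ ≤ 2*Cf := by linarith [hCf x, hCf (x - σ₀ • w)]
        have hintR : Integrable fun w =>
            ε/8 * g w + (2*Cf) *
              ((Metric.closedBall (0:EuclideanSpace ℝ (Fin n)) R)ᶜ).indicator g w :=
          (hgint.const_mul _).add
            ((hgint.indicator measurableSet_closedBall.compl).const_mul _)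
        have hptwise : ∀ w, |f x - f (x - σ₀ • w)| * g w
            ≤ ε/8 * g w + (2*Cf) *
              ((Metric.closedBall (0:EuclideanSpace ℝ (Fin n)) R)ᶜ).indicator g w := by
          intro w
          by_cases hw : ‖w‖ ≤ R
          · have hd : dist x (x - σ₀ • w) < r := by
              rw [dist_eq_norm, sub_sub_cancel, norm_smul, Real.norm_eq_abs, abs_of_pos hσ₀]
              calc σ₀ * ‖w‖ ≤ σ₀ * R := mul_le_mul_of_nonneg_left hw (le_of_lt hσ₀)
                _ = r/2 := by rw [hσ₀def]; field_simp; try ring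
                _ < r := by linarith
            have hfd : |f x - f (x - σ₀ • w)| ≤ ε/8 := by
              have h := hfr hd
              rw [Real.dist_eq] at h; linarith
            have hind : 0 ≤ (2*Cf) *
                ((Metric.closedBall (0:EuclideanSpace ℝ (Fin n)) R)ᶜ).indicator g w :=
              mul_nonneg (by linarith) (Set.indicator_apply_nonneg fun _ => hg0 _)
            nlinarith [hg0 w, mul_le_mul_of_nonneg_right hfd (hg0 w)]
          · have hwD : w ∈ (Metric.closedBall (0:EuclideanSpace ℝ (Fin n)) R)ᶜ := by
              simp only [mem_compl_iff, Metric.mem_closedBall, dist_zero_right]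
              exact fun h => hw h
            rw [Set.indicator_of_mem hwD]
            have h2cf : |f x - f (x - σ₀ • w)| ≤ 2*Cf := by
              calc |f x - f (x - σ₀ • w)| ≤ |f x| + |f (x - σ₀ • w)| := abs_sub _ _
                _ ≤ 2*Cf := by linarith [hCf x, hCf (x - σ₀ • w)]
            nlinarith [hg0 w, mul_le_mul_of_nonneg_right h2cf (hg0 w)]
        have hRint : (∫ w, (ε/8 * g w + (2*Cf) *
              ((Metric.closedBall (0:EuclideanSpace ℝ (Fin n)) R)ᶜ).indicator g w))
            = ε/8 + 2*Cf * ∫ w in (Metric.closedBall (0:EuclideanSpace ℝ (Fin n)) R)ᶜ, g w := by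
          rw [integral_add (hgint.const_mul _)
              ((hgint.indicator measurableSet_closedBall.compl).const_mul _),
            integral_const_mul, integral_const_mul, hg1, mul_one,
            integral_indicator measurableSet_closedBall.compl]
        have htail0 : 0 ≤ ∫ w in (Metric.closedBall (0:EuclideanSpace ℝ (Fin n)) R)ᶜ, g w :=
          setIntegral_nonneg measurableSet_closedBall.compl (fun y _ => hg0 y)
        have hfinal : ε/8 + 2*Cf * (∫ w in (Metric.closedBall (0:EuclideanSpace ℝ (Fin n)) R)ᶜ, g w)
            ≤ ε/4 := by
          have h1 : 2*Cf * (∫ w in (Metric.closedBall (0:EuclideanSpace ℝ (Fin n)) R)ᶜ, g w)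
              ≤ 2*Cf * (ε/(16*(Cf+1))) :=
            mul_le_mul_of_nonneg_left (le_of_lt hgR) (by linarith)
          have h2 : 2*Cf * (ε/(16*(Cf+1))) ≤ ε/8 := by
            rw [mul_div_assoc'] at *
            rw [div_le_div_iff₀ (by positivity) (by norm_num)]
            nlinarith
          linarith
        calc |∫ y, (f x - f y) * I y| ≤ ∫ y, |f x - f y| * I y := hstep1
          _ = ∫ w, |f x - f (x - σ₀ • w)| * g w := hchange
          _ ≤ ∫ w, (ε/8 * g w + (2*Cf) *
                ((Metric.closedBall (0:EuclideanSpace ℝ (Fin n)) R)ᶜ).indicator g w) :=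
              integral_mono hintL hintR hptwise
          _ = ε/8 + 2*Cf * ∫ w in (Metric.closedBall (0:EuclideanSpace ℝ (Fin n)) R)ᶜ, g w := hRint
          _ ≤ ε/4 := hfinal
      -- T2 : tail mass error
      have hT2 : |∫ y in Uᶜ, f y * I y| ≤ ε/8 := by
        have hb1 : |∫ y in Uᶜ, f y * I y| ≤ ∫ y in Uᶜ, f y * (Q * Cg) := by
          calc |∫ y in Uᶜ, f y * I y| ≤ ∫ y in Uᶜ, |f y * I y| :=
                abs_integral_le _ _
            _ ≤ ∫ y in Uᶜ, f y * (Q * Cg) := by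
                apply setIntegral_mono_on hfI.abs.integrableOn
                  ((hfint.mul_const _).integrableOn) hUmeas.compl
                intro y _
                rw [abs_mul, abs_of_nonneg (hf0 y), abs_of_nonneg (hI0 y)]
                exact mul_le_mul_of_nonneg_left (hIbd y) (hf0 y)
        have hb2 : ∫ y in Uᶜ, f y * (Q * Cg) = t * (Q * Cg) := by
          rw [integral_mul_const, ← htc]
        rw [hb2] at hb1
        have hb3 : t * (Q * Cg) ≤ δ' * ((Cg+1)*(Q+1)) := by
          apply mul_le_mul htδ (by nlinarith [hQ0.le, hCg0])
            (mul_nonneg hQ0.le hCg0) (le_of_lt hδ'pos)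
        rw [hδ'id] at hb3
        exact hb1.trans hb3
      -- T3 : discretization error
      have hT3i : ∀ i : Fin M, |∫ y in A (i:ℕ), (f y * I y - f y * I (p (i:ℕ)))| ≤ c i * (ε/8) := by
        intro i
        have hIcl : ∀ y ∈ A (i:ℕ), |I y - I (p (i:ℕ))| ≤ ε/8 := by
          intro y hy
          have hyB := hAsub (i:ℕ) hy
          have hiM : (i:ℕ) < M := i.isLt
          rw [hBdef] at hyB; dsimp only at hyB
          rw [if_pos hiM] at hyB
          have hd : dist y (p (i:ℕ)) < ρ := mem_ball.mp hyB.1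
          have hd2 : dist (σ₀⁻¹ • (x - y)) (σ₀⁻¹ • (x - p (i:ℕ))) < δg := by
            rw [dist_smul₀, Real.norm_eq_abs, abs_of_pos (inv_pos.mpr hσ₀)]
            have heq : dist (x - y) (x - p (i:ℕ)) = dist y (p (i:ℕ)) := by
              rw [dist_eq_norm, dist_eq_norm]
              have hcmp : x - y - (x - p (i:ℕ)) = -(y - p (i:ℕ)) := by abel
              rw [hcmp, norm_neg]
            rw [heq]
            have hval : σ₀⁻¹ * ρ = δg/2 := by rw [hρdef]; field_simp; try ring
            calc σ₀⁻¹ * dist y (p (i:ℕ)) < σ₀⁻¹ * ρ :=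
                  mul_lt_mul_of_pos_left hd (inv_pos.mpr hσ₀)
              _ = δg/2 := hval
              _ < δg := by linarith
          have hgd := hgδ hd2
          rw [Real.dist_eq] at hgd
          simp only [hIdef]
          rw [← mul_sub, abs_mul, abs_of_nonneg (by positivity : (0:ℝ) ≤ ((σ₀:ℝ)^n)⁻¹)]
          calc ((σ₀:ℝ)^n)⁻¹ * |g (σ₀⁻¹ • (x - y)) - g (σ₀⁻¹ • (x - p (i:ℕ)))|
              ≤ (σ₀^n)⁻¹ * (ε/8 * σ₀^n) :=
                mul_le_mul_of_nonneg_left (le_of_lt hgd) (by positivity)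
            _ = ε/8 := by field_simp
        have hint1 : IntegrableOn (fun y => f y * I y - f y * I (p (i:ℕ))) (A (i:ℕ)) volume :=
          (hfI.sub (hfint.mul_const _)).integrableOn
        calc |∫ y in A (i:ℕ), (f y * I y - f y * I (p (i:ℕ)))|
            ≤ ∫ y in A (i:ℕ), |f y * I y - f y * I (p (i:ℕ))| :=
              abs_integral_le _ _
          _ ≤ ∫ y in A (i:ℕ), f y * (ε/8) := by
              apply setIntegral_mono_on hint1.abs ((hfint.mul_const _).integrableOn) (hAmeas _)
              intro y hy
              rw [← mul_sub, abs_mul, abs_of_nonneg (hf0 y)]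
              exact mul_le_mul_of_nonneg_left (hIcl y hy) (hf0 y)
          _ = c i * (ε/8) := by rw [integral_mul_const]
      have hT3 : |∑ i : Fin M, ∫ y in A (i:ℕ), (f y * I y - f y * I (p (i:ℕ)))| ≤ ε/8 := by
        calc |∑ i : Fin M, ∫ y in A (i:ℕ), (f y * I y - f y * I (p (i:ℕ)))|
            ≤ ∑ i : Fin M, |∫ y in A (i:ℕ), (f y * I y - f y * I (p (i:ℕ)))| :=
              Finset.abs_sum_le_sum_abs _ _
          _ ≤ ∑ i : Fin M, c i * (ε/8) := Finset.sum_le_sum fun i _ => hT3i i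
          _ = (∑ i, c i) * (ε/8) := by rw [Finset.sum_mul]
          _ ≤ 1 * (ε/8) := mul_le_mul_of_nonneg_right hcle1 (by positivity)
          _ = ε/8 := one_mul _
      -- T4 : the extra component
      have hT4 : |t * g x| ≤ ε/8 := by
        rw [abs_mul, abs_of_nonneg ht0]
        have h1 : t * |g x| ≤ δ' * ((Cg+1)*(Q+1)) := by
          apply mul_le_mul htδ (by nlinarith [hCg x, hQ0.le, abs_nonneg (g x)])
            (abs_nonneg _) (le_of_lt hδ'pos)
        rw [hδ'id] at h1; linarith
      -- the decomposition
      have e2 : ∫ y, (f x - f y) * I y = f x - ∫ y, f y * I y := by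
        have hre : (fun y => (f x - f y) * I y) = fun y => f x * I y - f y * I y := by
          funext y; ring
        rw [hre, integral_sub (hIint.const_mul _) hfI, integral_const_mul, hI1, mul_one]
      have e3 := (integral_add_compl hUmeas hfI).symm
      have e4 : ∫ y in U, f y * I y = ∑ i : Fin M, ∫ y in A (i:ℕ), f y * I y := by
        rw [hUdef]
        exact integral_iUnion_fintype (s := fun i : Fin M => A (i:ℕ)) (fun i => hAmeas i) hpdisj
          (fun i => hfI.integrableOn)
      have e6 : ∀ i : Fin M, ∫ y in A (i:ℕ), (f y * I y - f y * I (p (i:ℕ)))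
          = (∫ y in A (i:ℕ), f y * I y) - ∫ y in A (i:ℕ), f y * I (p (i:ℕ)) :=
        fun i => integral_sub hfI.integrableOn (hfint.mul_const _).integrableOn
      have e5 : ∀ i : Fin M, c i * (σ₀^n)⁻¹ * g (σ₀⁻¹ • (x - p (i:ℕ)))
          = ∫ y in A (i:ℕ), f y * I (p (i:ℕ)) := by
        intro i
        rw [integral_mul_const, mul_assoc]
      have keyeq : f x - (∑ i : Fin M, c i * (σ₀^n)⁻¹ * g (σ₀⁻¹ • (x - p (i:ℕ))) + t * g x)
          = (∫ y, (f x - f y) * I y) + (∫ y in Uᶜ, f y * I y)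
            + (∑ i : Fin M, ∫ y in A (i:ℕ), (f y * I y - f y * I (p (i:ℕ)))) - t * g x := by
        have hs2 : ∑ i : Fin M, c i * (σ₀^n)⁻¹ * g (σ₀⁻¹ • (x - p (i:ℕ)))
            = ∑ i : Fin M, ∫ y in A (i:ℕ), f y * I (p (i:ℕ)) :=
          Finset.sum_congr rfl fun i _ => e5 i
        have hs3 : ∑ i : Fin M, ∫ y in A (i:ℕ), (f y * I y - f y * I (p (i:ℕ)))
            = (∑ i : Fin M, ∫ y in A (i:ℕ), f y * I y)
              - ∑ i : Fin M, ∫ y in A (i:ℕ), f y * I (p (i:ℕ)) := by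
          rw [← Finset.sum_sub_distrib]
          exact Finset.sum_congr rfl fun i _ => e6 i
        rw [hs2, hs3, e2, ← e4]
        linarith [e3]
      rw [Real.norm_eq_abs, keyeq]
      have habs4 : ∀ a b c d : ℝ, |a + b + c - d| ≤ |a| + |b| + |c| + |d| := by
        intro a b c d
        calc |a + b + c - d| ≤ |a + b + c| + |d| := abs_sub _ _
          _ ≤ (|a + b| + |c|) + |d| := by linarith [abs_add_le (a+b) c]
          _ ≤ |a| + |b| + |c| + |d| := by linarith [abs_add_le a b]
      have := habs4 (∫ y, (f x - f y) * I y) (∫ y in Uᶜ, f y * I y)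
        (∑ i : Fin M, ∫ y in A (i:ℕ), (f y * I y - f y * I (p (i:ℕ)))) (t * g x)
      linarith [hT1, hT2, hT3, hT4]
    have hrw : (fun x => f x - ∑ i : Fin (M+1),
          (Fin.snoc c t : Fin (M+1) → ℝ) i *
            (((Fin.snoc (fun _ => σ₀) 1 : Fin (M+1) → ℝ) i) ^ n)⁻¹ *
            g (((Fin.snoc (fun _ => σ₀) 1 : Fin (M+1) → ℝ) i)⁻¹ •
              (x - (Fin.snoc (fun i : Fin M => p (i:ℕ)) 0 : Fin (M+1) → _) i)))
        = fun x => f x - (∑ i : Fin M, c i * (σ₀^n)⁻¹ * g (σ₀⁻¹ • (x - p (i:ℕ))) + t * g x) := by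
      funext x
      rw [Fin.sum_univ_castSucc]
      simp only [Fin.snoc_castSucc, Fin.snoc_last, one_pow, inv_one, one_mul, one_smul, sub_zero,
        mul_one]
    rw [hrw]
    have hb := eLpNormEssSup_le_of_ae_bound (μ := volume) (C := 5/8*ε)
      (Filter.Eventually.of_forall key)
    calc eLpNorm _ ⊤ volume = eLpNormEssSup _ volume := eLpNorm_exponent_top
      _ ≤ ENNReal.ofReal (5/8*ε) := hb
      _ < ENNReal.ofReal ε := by
          rw [ENNReal.ofReal_lt_ofReal_iff hε]; linarith
end

section
/- Let f be a bounded continuous function on ℝⁿ that is also a pdf, let g ∈ C₀(ℝⁿ) be a pdf, and let K ⊂ ℝⁿ be compact. Then for every ε > 0 there exists a finite mixture h = Σᵢ₌₁ᵐ cᵢ σᵢ⁻ⁿ g((x − μᵢ)/σᵢ) with cᵢ ≥ 0, Σ cᵢ = 1, such that sup_{x ∈ K} |f(x) − h(x)| < ε. -/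
open MeasureTheory Filter Metric Topology Set

lemma tail_small {n : ℕ} {f : EuclideanSpace ℝ (Fin n) → ℝ}
    (hfint : Integrable f) {δ : ℝ} (hδ : 0 < δ) :
    ∃ R : ℝ, 1 ≤ R ∧ ∫ x in (Metric.closedBall (0 : EuclideanSpace ℝ (Fin n)) R)ᶜ, f x < δ := by
  have hmono : Monotone (fun k : ℕ => Metric.closedBall (0 : EuclideanSpace ℝ (Fin n)) k) :=
    fun a b hab => Metric.closedBall_subset_closedBall (by exact_mod_cast hab)
  have hU : (⋃ k : ℕ, Metric.closedBall (0 : EuclideanSpace ℝ (Fin n)) k) = Set.univ :=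
    iUnion_closedBall_nat 0
  have htends : Tendsto (fun k : ℕ => ∫ x in Metric.closedBall (0 : EuclideanSpace ℝ (Fin n)) k, f x)
      atTop (𝓝 (∫ x, f x)) := by
    have := tendsto_setIntegral_of_monotone (fun k : ℕ => measurableSet_closedBall) hmono
      (by rw [hU]; exact hfint.integrableOn)
    rwa [hU, Measure.restrict_univ] at this
  have h2 : Tendsto (fun k : ℕ => (∫ x, f x) - ∫ x in Metric.closedBall (0 : EuclideanSpace ℝ (Fin n)) k, f x)
      atTop (𝓝 0) := by
    have := (tendsto_const_nhds (x := ∫ x, f x) (f := atTop (α := ℕ))).sub htends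
    rwa [sub_self] at this
  have hev := h2.eventually (gt_mem_nhds hδ)
  obtain ⟨k, hk⟩ := hev.exists_forall_of_atTop
  refine ⟨(max k 1 : ℕ), by exact_mod_cast Nat.one_le_iff_ne_zero.2 (by positivity), ?_⟩
  have hcompl := integral_add_compl (measurableSet_closedBall
    (x := (0 : EuclideanSpace ℝ (Fin n))) (ε := ((max k 1 : ℕ) : ℝ))) hfint
  have := hk (max k 1) (le_max_left _ _)
  linarith [hcompl]

set_option maxHeartbeats 2000000 in
/-- Theorem (b): if `f` is a bounded continuous pdf, `g ∈ C₀(ℝⁿ)` a pdf, and `K` compact,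
then for every `ε > 0` some finite location-scale mixture of `g` is uniformly within `ε`
of `f` on `K`. -/
theorem stmt_6 (n : ℕ) (f g : EuclideanSpace ℝ (Fin n) → ℝ)
    (hf0 : ∀ x, 0 ≤ f x) (hfint : Integrable f) (hf1 : ∫ x, f x = 1)
    (hfc : Continuous f) (hfb : ∃ C : ℝ, ∀ x, |f x| ≤ C)
    (hg0 : ∀ x, 0 ≤ g x) (hgint : Integrable g) (hg1 : ∫ x, g x = 1)
    (hgc : Continuous g)
    (hgC0 : Tendsto g (cocompact (EuclideanSpace ℝ (Fin n))) (𝓝 0))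
    (K : Set (EuclideanSpace ℝ (Fin n))) (hK : IsCompact K)
    (ε : ℝ) (hε : 0 < ε) :
    ∃ (m : ℕ) (c : Fin m → ℝ) (μ : Fin m → EuclideanSpace ℝ (Fin n)) (σ : Fin m → ℝ),
      (∀ i, 0 < σ i) ∧ (∀ i, 0 ≤ c i) ∧ (∑ i, c i = 1) ∧
      ∀ x ∈ K, |f x - ∑ i, c i * ((σ i) ^ n)⁻¹ * g ((σ i)⁻¹ • (x - μ i))| < ε := by
  classical
  obtain ⟨C, hC⟩ := hfb
  have hC0 : 0 ≤ C := le_trans (abs_nonneg _) (hC 0)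
  -- a bound for g
  obtain ⟨B, hB0, hB⟩ : ∃ B : ℝ, 0 ≤ B ∧ ∀ x, |g x| ≤ B := by
    obtain ⟨s, hs, hsub⟩ := mem_cocompact.1 (hgC0 (Metric.ball_mem_nhds 0 one_pos))
    obtain ⟨B', hB'⟩ := hs.exists_bound_of_continuousOn hgc.continuousOn
    refine ⟨max B' 1, le_trans zero_le_one (le_max_right _ _), fun x => ?_⟩
    by_cases hx : x ∈ s
    · exact le_trans (hB' x hx) (le_max_left _ _)
    · have : g x ∈ Metric.ball (0:ℝ) 1 := hsub hx
      rw [Metric.mem_ball, Real.dist_eq, sub_zero] at this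
      exact le_trans this.le (le_max_right _ _)
  -- uniform continuity of g
  have hgu : UniformContinuous g := hgc.uniformContinuous_of_tendsto_cocompact hgC0
  -- uniform continuity of f on a compact thickening of K
  have hK1 : IsCompact (Metric.cthickening 1 K) := hK.cthickening
  have hKsub : K ⊆ Metric.cthickening 1 K := Metric.self_subset_cthickening K
  obtain ⟨δ₀, hδ₀, hfδ⟩ : ∃ δ > 0, ∀ a ∈ Metric.cthickening 1 K, ∀ b ∈ Metric.cthickening 1 K,
      dist a b < δ → dist (f a) (f b) < ε/8 :=
    Metric.uniformContinuousOn_iff.1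
      (hK1.uniformContinuousOn_of_continuous hfc.continuousOn) (ε/8) (by positivity)
  -- tail of g
  obtain ⟨R, hR1, hgtail⟩ := tail_small hgint (show (0:ℝ) < ε/(16*(C+1)) by positivity)
  -- the scale σ
  set σ : ℝ := min 1 δ₀ / (R + 1) with hσdef
  have hminpos : 0 < min 1 δ₀ := lt_min one_pos hδ₀
  have hRpos : (0:ℝ) < R + 1 := by linarith
  have hσ : 0 < σ := div_pos hminpos hRpos
  have hσn : (0:ℝ) < σ ^ n := pow_pos hσ n
  have hσRδ : ∀ u : EuclideanSpace ℝ (Fin n), ‖u‖ ≤ R → σ * ‖u‖ < δ₀ ∧ σ * ‖u‖ ≤ 1 := by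
    intro u hu
    have h1 : σ * ‖u‖ ≤ σ * R := by nlinarith [norm_nonneg u]
    have h2 : σ * (R + 1) = min 1 δ₀ := by
      rw [hσdef]; field_simp
    constructor
    · have : σ * R < σ * (R+1) := by nlinarith
      have := lt_of_le_of_lt h1 this
      rw [h2] at this
      exact lt_of_lt_of_le this (min_le_right _ _)
    · have : σ * R ≤ σ * (R+1) := by nlinarith
      have := le_trans h1 this
      rw [h2] at this
      exact le_trans this (min_le_left _ _)
  -- the rescaled kernel
  set gσ : EuclideanSpace ℝ (Fin n) → ℝ := fun z => (σ^n)⁻¹ * g (σ⁻¹ • z) with hgσdef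
  have hgσ0 : ∀ z, 0 ≤ gσ z := fun z => mul_nonneg (by positivity) (hg0 _)
  set M : ℝ := (σ^n)⁻¹ * B with hMdef
  have hM0 : 0 ≤ M := mul_nonneg (by positivity) hB0
  have hgσM : ∀ z, gσ z ≤ M := fun z => by
    have := hB (σ⁻¹ • z)
    have h := (abs_le.1 this).2
    have : (σ^n)⁻¹ * g (σ⁻¹ • z) ≤ (σ^n)⁻¹ * B := by
      apply mul_le_mul_of_nonneg_left h (by positivity)
    exact this
  have hgσc : Continuous gσ := continuous_const.mul (hgc.comp (continuous_const_smul σ⁻¹))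
  -- uniform continuity of gσ at scale σ * δ₁
  obtain ⟨δ₁, hδ₁, hgδ⟩ : ∃ δ > 0, ∀ {a b : EuclideanSpace ℝ (Fin n)}, dist a b < δ →
      dist (g a) (g b) < σ^n * (ε/8) :=
    Metric.uniformContinuous_iff.1 hgu (σ^n * (ε/8)) (by positivity)
  have hgσuc : ∀ a b : EuclideanSpace ℝ (Fin n), dist a b < σ * δ₁ → |gσ a - gσ b| ≤ ε/8 := by
    intro a b hab
    have hd : dist (σ⁻¹ • a) (σ⁻¹ • b) < δ₁ := by
      rw [dist_smul₀, Real.norm_eq_abs, abs_of_pos (inv_pos.2 hσ)]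
      calc σ⁻¹ * dist a b < σ⁻¹ * (σ * δ₁) :=
            mul_lt_mul_of_pos_left hab (inv_pos.2 hσ)
        _ = δ₁ := by field_simp
    have hlt := hgδ hd
    rw [Real.dist_eq] at hlt
    have heq : |gσ a - gσ b| = (σ^n)⁻¹ * |g (σ⁻¹ • a) - g (σ⁻¹ • b)| := by
      rw [hgσdef]
      rw [← mul_sub, abs_mul, abs_of_pos (by positivity : (0:ℝ) < (σ^n)⁻¹)]
    rw [heq]
    have h2 : (σ^n)⁻¹ * |g (σ⁻¹ • a) - g (σ⁻¹ • b)| ≤ (σ^n)⁻¹ * (σ^n * (ε/8)) :=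
      mul_le_mul_of_nonneg_left hlt.le (by positivity)
    calc (σ^n)⁻¹ * |g (σ⁻¹ • a) - g (σ⁻¹ • b)| ≤ (σ^n)⁻¹ * (σ^n * (ε/8)) := h2
      _ = ε/8 := by field_simp
  -- Step A preliminaries
  have hint1 : ∀ x : EuclideanSpace ℝ (Fin n), Integrable (fun u => g u * f (x - σ • u)) := by
    intro x
    have hcont : Continuous (fun u : EuclideanSpace ℝ (Fin n) => f (x - σ • u)) :=
      hfc.comp (continuous_const.sub (continuous_const_smul σ))
    have := hgint.bdd_mul hcont.aestronglyMeasurable (c := C)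
      (Filter.Eventually.of_forall fun u => by rw [Real.norm_eq_abs]; exact hC _)
    simpa [mul_comm] using this
  -- Step A : the convolution approximates f on K
  have hconv : ∀ x ∈ K, |f x - ∫ u, g u * f (x - σ • u)| ≤ ε/4 := by
    intro x hx
    have hxK1 : x ∈ Metric.cthickening 1 K := hKsub hx
    have hsubint : Integrable (fun u => g u * f x - g u * f (x - σ • u)) :=
      (hgint.mul_const (f x)).sub (hint1 x)
    have heq : f x - ∫ u, g u * f (x - σ • u) = ∫ u, g u * (f x - f (x - σ • u)) := by
      have h1 : ∫ u : EuclideanSpace ℝ (Fin n), g u * f x = f x := by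
        rw [integral_mul_const, hg1, one_mul]
      calc f x - ∫ u, g u * f (x - σ • u)
          = (∫ u : EuclideanSpace ℝ (Fin n), g u * f x) - ∫ u, g u * f (x - σ • u) := by rw [h1]
        _ = ∫ u, (g u * f x - g u * f (x - σ • u)) :=
            (integral_sub (hgint.mul_const (f x)) (hint1 x)).symm
        _ = ∫ u, g u * (f x - f (x - σ • u)) := by simp_rw [mul_sub]
    rw [heq]
    have hsubint' : Integrable (fun u => g u * (f x - f (x - σ • u))) := by
      simpa [mul_sub] using hsubint
    have habsint : Integrable (fun u => |g u * (f x - f (x - σ • u))|) := hsubint'.abs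
    have habs : |∫ u, g u * (f x - f (x - σ • u))| ≤ ∫ u, |g u * (f x - f (x - σ • u))| := by
      have := norm_integral_le_integral_norm (μ := volume) (fun u => g u * (f x - f (x - σ • u)))
      simp only [Real.norm_eq_abs] at this
      exact this
    have hsplit := integral_add_compl (measurableSet_closedBall
      (x := (0:EuclideanSpace ℝ (Fin n))) (ε := R)) habsint
    have hb1 : ∫ u in Metric.closedBall (0:EuclideanSpace ℝ (Fin n)) R,
        |g u * (f x - f (x - σ • u))| ≤ ε/8 := by
      have hmono1 : ∫ u in Metric.closedBall (0:EuclideanSpace ℝ (Fin n)) R,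
          |g u * (f x - f (x - σ • u))| ≤
          ∫ u in Metric.closedBall (0:EuclideanSpace ℝ (Fin n)) R, g u * (ε/8) := by
        apply setIntegral_mono_on habsint.integrableOn
          (hgint.mul_const (ε/8)).integrableOn measurableSet_closedBall
        intro u hu
        rw [abs_mul, abs_of_nonneg (hg0 u)]
        apply mul_le_mul_of_nonneg_left _ (hg0 u)
        have hu' : ‖u‖ ≤ R := by rwa [Metric.mem_closedBall, dist_zero_right] at hu
        obtain ⟨hlt, hle⟩ := hσRδ u hu'
        have hnrm : ‖σ • u‖ = σ * ‖u‖ := by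
          rw [norm_smul, Real.norm_eq_abs, abs_of_pos hσ]
        have hx2 : x - σ • u ∈ Metric.cthickening 1 K := by
          apply Metric.mem_cthickening_of_dist_le (x - σ • u) x 1 K hx
          rw [dist_eq_norm, sub_sub_cancel_left, norm_neg, hnrm]
          exact hle
        have hdist : dist x (x - σ • u) < δ₀ := by
          rw [dist_eq_norm, sub_sub_cancel, hnrm]
          exact hlt
        have := hfδ x hxK1 _ hx2 hdist
        rw [Real.dist_eq] at this
        exact this.le
      have h2 : ∫ u in Metric.closedBall (0:EuclideanSpace ℝ (Fin n)) R, g u * (ε/8)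
          = (∫ u in Metric.closedBall (0:EuclideanSpace ℝ (Fin n)) R, g u) * (ε/8) :=
        integral_mul_const _ _
      have h3 : (∫ u in Metric.closedBall (0:EuclideanSpace ℝ (Fin n)) R, g u) ≤ 1 := by
        rw [← hg1]
        exact setIntegral_le_integral hgint (Filter.Eventually.of_forall hg0)
      calc _ ≤ (∫ u in Metric.closedBall (0:EuclideanSpace ℝ (Fin n)) R, g u) * (ε/8) :=
            hmono1.trans h2.le
        _ ≤ 1 * (ε/8) := by
            apply mul_le_mul_of_nonneg_right h3 (by positivity)
        _ = ε/8 := one_mul _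
    have hb2 : ∫ u in (Metric.closedBall (0:EuclideanSpace ℝ (Fin n)) R)ᶜ,
        |g u * (f x - f (x - σ • u))| ≤ ε/8 := by
      have hmono2 : ∫ u in (Metric.closedBall (0:EuclideanSpace ℝ (Fin n)) R)ᶜ,
          |g u * (f x - f (x - σ • u))| ≤
          ∫ u in (Metric.closedBall (0:EuclideanSpace ℝ (Fin n)) R)ᶜ, g u * (2*C) := by
        apply setIntegral_mono_on habsint.integrableOn
          (hgint.mul_const (2*C)).integrableOn measurableSet_closedBall.compl
        intro u _
        rw [abs_mul, abs_of_nonneg (hg0 u)]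
        apply mul_le_mul_of_nonneg_left _ (hg0 u)
        calc |f x - f (x - σ • u)| ≤ |f x| + |f (x - σ • u)| := abs_sub _ _
          _ ≤ C + C := add_le_add (hC _) (hC _)
          _ = 2*C := by ring
      have h2 : ∫ u in (Metric.closedBall (0:EuclideanSpace ℝ (Fin n)) R)ᶜ, g u * (2*C)
          = (∫ u in (Metric.closedBall (0:EuclideanSpace ℝ (Fin n)) R)ᶜ, g u) * (2*C) :=
        integral_mul_const _ _
      have h3 : (∫ u in (Metric.closedBall (0:EuclideanSpace ℝ (Fin n)) R)ᶜ, g u) * (2*C)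
          ≤ (ε/(16*(C+1))) * (2*C) :=
        mul_le_mul_of_nonneg_right hgtail.le (by positivity)
      have h4 : (ε/(16*(C+1))) * (2*C) ≤ ε/8 := by
        have hq : (2*C) / (16*(C+1)) ≤ 1/8 := by
          rw [div_le_div_iff₀ (by positivity) (by norm_num)]
          nlinarith
        have : (ε/(16*(C+1))) * (2*C) = ε * ((2*C) / (16*(C+1))) := by ring
        rw [this]
        calc ε * ((2*C) / (16*(C+1))) ≤ ε * (1/8) :=
              mul_le_mul_of_nonneg_left hq hε.le
          _ = ε/8 := by ring
      exact hmono2.trans (h2.le.trans (h3.trans h4))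
    calc |∫ u, g u * (f x - f (x - σ • u))| ≤ ∫ u, |g u * (f x - f (x - σ • u))| := habs
      _ = (∫ u in Metric.closedBall (0:EuclideanSpace ℝ (Fin n)) R,
            |g u * (f x - f (x - σ • u))|)
          + ∫ u in (Metric.closedBall (0:EuclideanSpace ℝ (Fin n)) R)ᶜ,
            |g u * (f x - f (x - σ • u))| := hsplit.symm
      _ ≤ ε/8 + ε/8 := add_le_add hb1 hb2
      _ = ε/4 := by ring
  -- change of variables
  have hcov : ∀ x : EuclideanSpace ℝ (Fin n),
      (∫ u, g u * f (x - σ • u)) = ∫ y, gσ (x - y) * f y := by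
    intro x
    have h1 := MeasureTheory.Measure.integral_comp_smul
      (volume : Measure (EuclideanSpace ℝ (Fin n)))
      (fun w => g (σ⁻¹ • w) * f (x - w)) σ
    rw [finrank_euclideanSpace_fin] at h1
    simp_rw [inv_smul_smul₀ hσ.ne'] at h1
    rw [abs_of_pos (by positivity : (0:ℝ) < (σ^n)⁻¹)] at h1
    have h3 : ∫ w, g (σ⁻¹ • w) * f (x - w) = ∫ y, g (σ⁻¹ • (x - y)) * f y := by
      have := MeasureTheory.integral_sub_left_eq_self
        (fun y : EuclideanSpace ℝ (Fin n) => g (σ⁻¹ • (x - y)) * f y) volume x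
      simp only [sub_sub_cancel] at this
      exact this
    rw [h3, smul_eq_mul, ← integral_const_mul] at h1
    rw [h1]
    congr 1
    funext y
    rw [hgσdef]
    ring
  -- Step B : discretization
  set M1 : ℝ := ε/(8*(M+1)) with hM1def
  have hM1 : 0 < M1 := by rw [hM1def]; positivity
  have hMε : M * M1 ≤ ε/8 := by
    rw [hM1def]
    have h1 : M * (ε / (8 * (M + 1))) = ε * (M / (8 * (M+1))) := by ring
    have h2 : M / (8*(M+1)) ≤ 1/8 := by
      rw [div_le_div_iff₀ (by positivity) (by norm_num)]
      nlinarith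
    rw [h1]
    calc ε * (M / (8*(M+1))) ≤ ε * (1/8) := mul_le_mul_of_nonneg_left h2 hε.le
      _ = ε/8 := by ring
  obtain ⟨R₂, hR₂1, hftail⟩ := tail_small hfint hM1
  set L : Set (EuclideanSpace ℝ (Fin n)) := Metric.closedBall 0 R₂ with hLdef
  have hLc : IsCompact L := isCompact_closedBall _ _
  have hLmeas : MeasurableSet L := measurableSet_closedBall
  set r : ℝ := σ * δ₁ / 2 with hrdef
  have hr : 0 < r := by positivity
  have hrlt : r < σ * δ₁ := by rw [hrdef]; linarith [mul_pos hσ hδ₁]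
  obtain ⟨t, ht⟩ := hLc.elim_finite_subcover (fun p : EuclideanSpace ℝ (Fin n) => Metric.ball p r)
    (fun _ => Metric.isOpen_ball) (fun x hx => Set.mem_iUnion.2 ⟨x, Metric.mem_ball_self hr⟩)
  set N := t.card with hNdef
  set p : Fin N → EuclideanSpace ℝ (Fin n) :=
    fun i => ((t.equivFin.symm i : t) : EuclideanSpace ℝ (Fin n)) with hpdef
  set A : Fin N → Set (EuclideanSpace ℝ (Fin n)) :=
    fun i => (L ∩ Metric.ball (p i) r) \ ⋃ k : Fin N, ⋃ (_ : k < i), Metric.ball (p k) r with hAdef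
  have hAmeas : ∀ i, MeasurableSet (A i) := fun i =>
    (hLmeas.inter measurableSet_ball).diff
      (MeasurableSet.iUnion fun k => MeasurableSet.iUnion fun _ => measurableSet_ball)
  have hAball : ∀ i, A i ⊆ Metric.ball (p i) r := fun i y hy => hy.1.2
  have hAL : ∀ i, A i ⊆ L := fun i y hy => hy.1.1
  have hAdisj : Pairwise (Function.onFun Disjoint A) := by
    have key : ∀ i j : Fin N, i < j → Disjoint (A i) (A j) := by
      intro i j hij
      rw [Set.disjoint_left]
      intro y hyi hyj
      exact hyj.2 (Set.mem_iUnion.2 ⟨i, Set.mem_iUnion.2 ⟨hij, hyi.1.2⟩⟩)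
    intro i j hij
    rcases lt_or_gt_of_ne hij with h | h
    · exact key i j h
    · exact (key j i h).symm
  have hAunion : (⋃ i, A i) = L := by
    apply Set.Subset.antisymm
    · exact Set.iUnion_subset fun i => hAL i
    · intro y hy
      have hex : ∃ i : Fin N, y ∈ Metric.ball (p i) r := by
        have := ht hy
        rw [Set.mem_iUnion₂] at this
        obtain ⟨q, hqt, hq⟩ := this
        refine ⟨t.equivFin ⟨q, hqt⟩, ?_⟩
        have hpe : p (t.equivFin ⟨q, hqt⟩) = q := by
          simp [hpdef, Equiv.symm_apply_apply]
        rw [Metric.mem_ball, hpe]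
        exact hq
      obtain ⟨i, hi⟩ := hex
      set s : Finset (Fin N) := Finset.univ.filter (fun i => y ∈ Metric.ball (p i) r) with hsdef
      have hsne : s.Nonempty := ⟨i, by rw [hsdef, Finset.mem_filter]; exact ⟨Finset.mem_univ _, hi⟩⟩
      set i₀ := s.min' hsne with hi₀def
      have hi₀mem : i₀ ∈ s := s.min'_mem hsne
      have hi₀ball : y ∈ Metric.ball (p i₀) r := by
        have := hi₀mem; rw [hsdef, Finset.mem_filter] at this; exact this.2
      refine Set.mem_iUnion.2 ⟨i₀, ⟨⟨hy, hi₀ball⟩, ?_⟩⟩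
      intro hmem
      rw [Set.mem_iUnion] at hmem
      obtain ⟨k, hk⟩ := hmem
      rw [Set.mem_iUnion] at hk
      obtain ⟨hklt, hkball⟩ := hk
      have hks : k ∈ s := by rw [hsdef, Finset.mem_filter]; exact ⟨Finset.mem_univ _, hkball⟩
      exact absurd (s.min'_le k hks) (not_le.2 hklt)
  -- integrability of kernels against f
  have hIint : ∀ x : EuclideanSpace ℝ (Fin n), Integrable (fun y => gσ (x - y) * f y) := by
    intro x
    exact hfint.bdd_mul ((hgσc.comp (continuous_const.sub continuous_id)).aestronglyMeasurable) (c := M)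
      (Filter.Eventually.of_forall fun y => by rw [Real.norm_eq_abs, abs_of_nonneg (hgσ0 _)]; exact hgσM _)
  have hLf_le : ∫ y in L, f y ≤ 1 := by
    rw [← hf1]
    exact setIntegral_le_integral hfint (Filter.Eventually.of_forall hf0)
  have hLcompl : (1 - ∫ y in L, f y) = ∫ y in Lᶜ, f y := by
    have := integral_add_compl hLmeas hfint
    rw [hf1] at this
    linarith
  have hLcompl_lt : ∫ y in Lᶜ, f y < M1 := hftail
  have hLcompl_nonneg : 0 ≤ ∫ y in Lᶜ, f y :=
    setIntegral_nonneg hLmeas.compl fun y _ => hf0 y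
  have hsumA : ∑ i, ∫ y in A i, f y = ∫ y in L, f y := by
    rw [← hAunion, integral_iUnion_fintype hAmeas hAdisj (fun i => hfint.integrableOn)]
  -- the mixture
  refine ⟨N+1, Fin.snoc (fun i => ∫ y in A i, f y) (1 - ∫ y in L, f y), Fin.snoc p 0,
    fun _ => σ, fun _ => hσ, ?_, ?_, ?_⟩
  · intro i
    induction i using Fin.lastCases with
    | last =>
      rw [Fin.snoc_last]
      linarith
    | cast i =>
      rw [Fin.snoc_castSucc]
      exact setIntegral_nonneg (hAmeas i) fun y _ => hf0 y
  · rw [Fin.sum_univ_castSucc]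
    simp only [Fin.snoc_castSucc, Fin.snoc_last]
    rw [hsumA]
    ring
  · intro x hx
    rw [Fin.sum_univ_castSucc]
    simp only [Fin.snoc_castSucc, Fin.snoc_last, sub_zero]
    have hgσform : ∀ z : EuclideanSpace ℝ (Fin n), (σ^n)⁻¹ * g (σ⁻¹ • z) = gσ z :=
      fun z => by rw [hgσdef]
    simp only [mul_assoc, hgσform]
    set S : ℝ := (∑ i : Fin N, (∫ y in A i, f y) * gσ (x - p i))
      + (1 - ∫ y in L, f y) * gσ x with hSdef
    set I : ℝ := ∫ y, gσ (x - y) * f y with hIdef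
    have hfI : |f x - I| ≤ ε/4 := by rw [hIdef, ← hcov x]; exact hconv x hx
    have hIsplit : I = (∑ i, ∫ y in A i, gσ (x - y) * f y) + ∫ y in Lᶜ, gσ (x - y) * f y := by
      have h1 := integral_add_compl hLmeas (hIint x)
      have h2 : ∫ y in L, gσ (x - y) * f y = ∑ i, ∫ y in A i, gσ (x - y) * f y := by
        rw [← hAunion, integral_iUnion_fintype hAmeas hAdisj (fun i => (hIint x).integrableOn)]
      rw [hIdef, ← h1, h2]
    have hterm : ∀ i : Fin N,
        |(∫ y in A i, gσ (x - y) * f y) - (∫ y in A i, f y) * gσ (x - p i)|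
          ≤ (ε/8) * ∫ y in A i, f y := by
      intro i
      have hconst : (∫ y in A i, f y) * gσ (x - p i) = ∫ y in A i, gσ (x - p i) * f y := by
        rw [integral_const_mul, mul_comm]
      rw [hconst, ← integral_sub ((hIint x).integrableOn) ((hfint.const_mul _).integrableOn)]
      have habs2 := norm_integral_le_integral_norm (μ := volume.restrict (A i))
        (fun y => gσ (x - y) * f y - gσ (x - p i) * f y)
      simp only [Real.norm_eq_abs] at habs2
      refine habs2.trans ?_
      have hmono : ∫ y in A i, |gσ (x - y) * f y - gσ (x - p i) * f y|
          ≤ ∫ y in A i, (ε/8) * f y := by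
        apply setIntegral_mono_on
          (((hIint x).integrableOn.sub ((hfint.const_mul _).integrableOn)).abs)
          ((hfint.const_mul (ε/8)).integrableOn) (hAmeas i)
        intro y hy
        simp only [Pi.sub_apply]
        rw [← sub_mul, abs_mul, abs_of_nonneg (hf0 y)]
        apply mul_le_mul_of_nonneg_right _ (hf0 y)
        apply hgσuc
        have hd : dist (x - y) (x - p i) = dist y (p i) := by
          rw [dist_eq_norm, sub_sub_sub_cancel_left, ← dist_eq_norm, dist_comm]
        rw [hd]
        exact lt_trans (Metric.mem_ball.1 (hAball i hy)) hrlt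
      refine hmono.trans ?_
      exact (integral_const_mul _ _).le
    have hsum_bound : |∑ i : Fin N,
        ((∫ y in A i, gσ (x - y) * f y) - (∫ y in A i, f y) * gσ (x - p i))| ≤ ε/8 := by
      calc |∑ i : Fin N, ((∫ y in A i, gσ (x - y) * f y) - (∫ y in A i, f y) * gσ (x - p i))|
          ≤ ∑ i : Fin N, |(∫ y in A i, gσ (x - y) * f y) - (∫ y in A i, f y) * gσ (x - p i)| :=
            Finset.abs_sum_le_sum_abs _ _
        _ ≤ ∑ i : Fin N, (ε/8) * ∫ y in A i, f y := Finset.sum_le_sum fun i _ => hterm i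
        _ = (ε/8) * ∑ i : Fin N, ∫ y in A i, f y := by rw [Finset.mul_sum]
        _ = (ε/8) * ∫ y in L, f y := by rw [hsumA]
        _ ≤ (ε/8) * 1 := mul_le_mul_of_nonneg_left hLf_le (by positivity)
        _ = ε/8 := mul_one _
    have htail1 : |∫ y in Lᶜ, gσ (x - y) * f y| ≤ ε/8 := by
      have h0 : 0 ≤ ∫ y in Lᶜ, gσ (x - y) * f y :=
        setIntegral_nonneg hLmeas.compl fun y _ => mul_nonneg (hgσ0 _) (hf0 _)
      rw [abs_of_nonneg h0]
      have h1 : ∫ y in Lᶜ, gσ (x - y) * f y ≤ ∫ y in Lᶜ, M * f y := by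
        apply setIntegral_mono_on ((hIint x).integrableOn)
          ((hfint.const_mul M).integrableOn) hLmeas.compl
        intro y _
        exact mul_le_mul_of_nonneg_right (hgσM _) (hf0 y)
      have h2 : ∫ y in Lᶜ, M * f y = M * ∫ y in Lᶜ, f y := integral_const_mul _ _
      have h3 : M * ∫ y in Lᶜ, f y ≤ M * M1 := mul_le_mul_of_nonneg_left hLcompl_lt.le hM0
      linarith
    have htail2 : |(1 - ∫ y in L, f y) * gσ x| ≤ ε/8 := by
      rw [hLcompl, abs_mul, abs_of_nonneg hLcompl_nonneg, abs_of_nonneg (hgσ0 _)]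
      calc (∫ y in Lᶜ, f y) * gσ x ≤ M1 * M :=
            mul_le_mul hLcompl_lt.le (hgσM _) (hgσ0 _) hM1.le
        _ ≤ ε/8 := by rw [mul_comm]; exact hMε
    have hdecomp : I - S =
        (∑ i : Fin N, ((∫ y in A i, gσ (x - y) * f y) - (∫ y in A i, f y) * gσ (x - p i)))
        + ((∫ y in Lᶜ, gσ (x - y) * f y) - (1 - ∫ y in L, f y) * gσ x) := by
      rw [hIsplit, hSdef, Finset.sum_sub_distrib]
      ring
    have hIS : |I - S| ≤ ε/8 + (ε/8 + ε/8) := by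
      rw [hdecomp]
      calc |(∑ i : Fin N, ((∫ y in A i, gσ (x - y) * f y) - (∫ y in A i, f y) * gσ (x - p i)))
          + ((∫ y in Lᶜ, gσ (x - y) * f y) - (1 - ∫ y in L, f y) * gσ x)|
          ≤ |∑ i : Fin N, ((∫ y in A i, gσ (x - y) * f y) - (∫ y in A i, f y) * gσ (x - p i))|
            + |(∫ y in Lᶜ, gσ (x - y) * f y) - (1 - ∫ y in L, f y) * gσ x| := abs_add_le _ _
        _ ≤ ε/8 + (|∫ y in Lᶜ, gσ (x - y) * f y| + |(1 - ∫ y in L, f y) * gσ x|) :=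
            add_le_add hsum_bound (abs_sub _ _)
        _ ≤ ε/8 + (ε/8 + ε/8) := add_le_add le_rfl (add_le_add htail1 htail2)
    calc |f x - S| = |(f x - I) + (I - S)| := by rw [sub_add_sub_cancel]
      _ ≤ |f x - I| + |I - S| := abs_add_le _ _
      _ ≤ ε/4 + (ε/8 + (ε/8 + ε/8)) := add_le_add hfI hIS
      _ < ε := by linarith
end

section
/- Let 1 < p < ∞, let f be a pdf on ℝⁿ with f ∈ L^p(ℝⁿ), and let g ∈ C₀(ℝⁿ) be a pdf. Then for every ε > 0 there exists a finite mixture h = Σᵢ₌₁ᵐ cᵢ σᵢ⁻ⁿ g((x − μᵢ)/σᵢ) with cᵢ ≥ 0, Σ cᵢ = 1, such that ‖f − h‖_{L^p} < ε. -/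
open MeasureTheory Filter Function
open scoped ENNReal

/-- Minkowski's integral inequality, in a special product form. -/
theorem mink_aux {α β : Type*} [MeasurableSpace α] [MeasurableSpace β]
    {μ : Measure α} {ν : Measure β} [SigmaFinite μ] [SFinite ν]
    {p : ℝ} (hp : 1 < p) (φ : β → ℝ≥0∞) (ψ : α → β → ℝ≥0∞)
    (hφ : Measurable φ) (hψ : Measurable (uncurry ψ)) :
    (∫⁻ x, (∫⁻ y, φ y * ψ x y ∂ν) ^ p ∂μ) ^ (1/p)
      ≤ ∫⁻ y, φ y * (∫⁻ x, ψ x y ^ p ∂μ) ^ (1/p) ∂ν := by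
  have hp0 : (0:ℝ) < p := by linarith
  set q : ℝ := p.conjExponent with hq
  have hpq : p.HolderConjugate q := Real.HolderConjugate.conjExponent hp
  have hq1 : 1 < q := hpq.symm.lt
  have hq0 : (0:ℝ) < q := by linarith
  set R : ℝ≥0∞ := ∫⁻ y, φ y * (∫⁻ x, ψ x y ^ p ∂μ) ^ (1/p) ∂ν with hR
  set Φ : α → ℝ≥0∞ := fun x => ∫⁻ y, φ y * ψ x y ∂ν with hΦ
  have hΦm : Measurable Φ :=
    Measurable.lintegral_prod_right' (f := fun z => φ z.2 * ψ z.1 z.2)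
      ((hφ.comp measurable_snd).mul hψ)
  set H : ℕ → α → ℝ≥0∞ := fun m x =>
    (spanningSets μ m).indicator (fun x => min (Φ x) m) x with hH
  have hHm : ∀ m, Measurable (H m) := fun m =>
    (hΦm.min measurable_const).indicator (measurableSet_spanningSets μ m)
  have hHmono : Monotone H := by
    intro a b hab x
    simp only [H, Set.indicator]
    by_cases hx : x ∈ spanningSets μ a
    · have hx' : x ∈ spanningSets μ b := monotone_spanningSets μ hab hx
      simp only [hx, hx', if_true]
      exact min_le_min le_rfl (Nat.cast_le.2 hab)
    · simp only [hx, if_false]; positivity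
  have hHle : ∀ m x, H m x ≤ Φ x := by
    intro m x
    simp only [H, Set.indicator]
    split_ifs
    · exact min_le_left _ _
    · exact zero_le
  set A : ℕ → ℝ≥0∞ := fun m => ∫⁻ x, H m x ^ p ∂μ with hA
  have hAfin : ∀ m, A m < ∞ := by
    intro m
    have hpb : ∀ x, H m x ^ p ≤ (spanningSets μ m).indicator (fun _ => (m:ℝ≥0∞) ^ p) x := by
      intro x
      simp only [H, Set.indicator]
      split_ifs
      · exact ENNReal.rpow_le_rpow (min_le_right _ _) hp0.le
      · simp [ENNReal.zero_rpow_of_pos hp0]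
    calc A m ≤ ∫⁻ x, (spanningSets μ m).indicator (fun _ => (m:ℝ≥0∞) ^ p) x ∂μ :=
          lintegral_mono hpb
      _ = (m:ℝ≥0∞) ^ p * μ (spanningSets μ m) := by
          rw [lintegral_indicator (measurableSet_spanningSets μ m)]
          simp
      _ < ∞ := ENNReal.mul_lt_top
            (ENNReal.rpow_lt_top_of_nonneg hp0.le (by simp))
            (measure_spanningSets_lt_top μ m)
  have key : ∀ m, A m ^ (1/p) ≤ R := by
    intro m
    have step1 : A m ≤ ∫⁻ x, H m x ^ (p-1) * Φ x ∂μ := by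
      apply lintegral_mono
      intro x
      show H m x ^ p ≤ H m x ^ (p - 1) * Φ x
      have hsplit : H m x ^ p = H m x ^ (p - 1) * H m x := by
        have h := ENNReal.rpow_add_of_nonneg (x := H m x) (p-1) 1 (by linarith) zero_le_one
        have h2 : p - 1 + 1 = p := by ring
        rw [h2] at h
        rw [h, ENNReal.rpow_one]
      rw [hsplit]
      exact mul_le_mul_right (hHle m x) _
    have hψx : ∀ x : α, Measurable fun y => ψ x y :=
      fun x => hψ.comp measurable_prodMk_left
    have hψy : ∀ y : β, Measurable fun x => ψ x y :=
      fun y => hψ.comp measurable_prodMk_right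
    have step2 : ∫⁻ x, H m x ^ (p-1) * Φ x ∂μ
        = ∫⁻ y, ∫⁻ x, φ y * (ψ x y * H m x ^ (p-1)) ∂μ ∂ν := by
      rw [← lintegral_lintegral_swap]
      · apply lintegral_congr; intro x
        rw [mul_comm, hΦ]
        rw [← lintegral_mul_const _ (f := fun y => φ y * ψ x y) (hφ.mul (hψx x))]
        exact lintegral_congr fun y => by ring
      · exact ((hφ.comp measurable_snd).mul
          (hψ.mul (((hHm m).pow_const _).comp measurable_fst))).aemeasurable
    have step3 : ∀ y, ∫⁻ x, ψ x y * H m x ^ (p-1) ∂μ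
        ≤ (∫⁻ x, ψ x y ^ p ∂μ) ^ (1/p) * A m ^ (1/q) := by
      intro y
      have hH2 : ∀ x, (H m x ^ (p-1)) ^ q = H m x ^ p := by
        intro x
        rw [← ENNReal.rpow_mul]
        congr 1
        have hps : p - 1 ≠ 0 := by linarith
        rw [hq, Real.conjExponent]
        field_simp
      calc ∫⁻ x, ψ x y * H m x ^ (p-1) ∂μ
          ≤ (∫⁻ x, ψ x y ^ p ∂μ) ^ (1/p) * (∫⁻ x, (H m x ^ (p-1)) ^ q ∂μ) ^ (1/q) :=
            ENNReal.lintegral_mul_le_Lp_mul_Lq μ hpq (hψy y).aemeasurable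
              ((hHm m).pow_const _).aemeasurable
        _ = (∫⁻ x, ψ x y ^ p ∂μ) ^ (1/p) * A m ^ (1/q) := by
            congr 2
            exact lintegral_congr fun x => hH2 x
    have hSm : Measurable fun y => (∫⁻ x, ψ x y ^ p ∂μ) ^ (1/p) :=
      (Measurable.lintegral_prod_left' (hψ.pow_const _)).pow_const _
    have step4 : A m ≤ R * A m ^ (1/q) := by
      calc A m ≤ ∫⁻ y, ∫⁻ x, φ y * (ψ x y * H m x ^ (p-1)) ∂μ ∂ν := step1.trans step2.le
        _ ≤ ∫⁻ y, φ y * ((∫⁻ x, ψ x y ^ p ∂μ) ^ (1/p) * A m ^ (1/q)) ∂ν := by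
            apply lintegral_mono; intro y
            show ∫⁻ x, φ y * (ψ x y * H m x ^ (p-1)) ∂μ
              ≤ φ y * ((∫⁻ x, ψ x y ^ p ∂μ) ^ (1/p) * A m ^ (1/q))
            rw [lintegral_const_mul _ (f := fun x => ψ x y * H m x ^ (p-1)) ((hψy y).mul ((hHm m).pow_const _))]
            exact mul_le_mul_right (step3 y) _
        _ = ∫⁻ y, (φ y * (∫⁻ x, ψ x y ^ p ∂μ) ^ (1/p)) * A m ^ (1/q) ∂ν :=
            lintegral_congr fun y => by ring
        _ = R * A m ^ (1/q) := by
            rw [lintegral_mul_const _ (f := fun y => φ y * (∫⁻ x, ψ x y ^ p ∂μ) ^ (1/p)) (hφ.mul hSm), hR]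
    rcases eq_or_ne (A m) 0 with h0 | h0
    · rw [h0, one_div, ENNReal.zero_rpow_of_pos (by positivity)]
      exact zero_le
    · have hsplit : A m = A m ^ (1/p) * A m ^ (1/q) := by
        rw [← ENNReal.rpow_add_of_nonneg (1/p) (1/q) (by positivity) (by positivity)]
        rw [one_div, one_div, hpq.inv_add_inv_eq_one, ENNReal.rpow_one]
      nth_rewrite 1 [hsplit] at step4
      have hne0 : A m ^ (1/q) ≠ 0 := by
        simp [ENNReal.rpow_eq_zero_iff, h0, (hAfin m).ne]
      have hnetop : A m ^ (1/q) ≠ ∞ :=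
        ENNReal.rpow_ne_top_of_nonneg (by positivity) (hAfin m).ne
      exact (ENNReal.mul_le_mul_iff_left hne0 hnetop).1 step4
  -- monotone convergence
  have hsup : ∫⁻ x, Φ x ^ p ∂μ = ⨆ m, A m := by
    have hpt : ∀ x, (⨆ m, H m x ^ p) = Φ x ^ p := by
      intro x
      have h1 : (⨆ m, H m x) = Φ x := by
        apply le_antisymm (iSup_le fun m => hHle m x)
        obtain ⟨m₀, hm₀⟩ : ∃ m₀, x ∈ spanningSets μ m₀ :=
          Set.mem_iUnion.1 (by rw [iUnion_spanningSets]; trivial)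
        have hmem : ∀ m : ℕ, x ∈ spanningSets μ (m + m₀) :=
          fun m => monotone_spanningSets μ (Nat.le_add_left _ _) hm₀
        have hval : ∀ m : ℕ, min (Φ x) m ≤ ⨆ k, H k x := by
          intro m
          refine le_trans ?_ (le_iSup _ (m + m₀))
          simp only [H, Set.indicator, hmem m, if_true]
          exact min_le_min le_rfl (Nat.cast_le.2 (Nat.le_add_right _ _))
        rcases eq_or_ne (Φ x) ∞ with htop | htop
        · rw [htop]
          rw [htop] at hval
          have h2 : ∀ m : ℕ, (m : ℝ≥0∞) ≤ ⨆ k, H k x := by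
            intro m
            refine le_trans ?_ (hval m)
            simp [min_eq_right (le_top : (m:ℝ≥0∞) ≤ ⊤)]
          calc (⊤:ℝ≥0∞) = ⨆ (m:ℕ), (m:ℝ≥0∞) := ENNReal.iSup_natCast.symm
            _ ≤ ⨆ k, H k x := iSup_le h2
        · obtain ⟨m, hm⟩ := ENNReal.exists_nat_gt htop
          have := hval m
          rwa [min_eq_left hm.le] at this
      rw [← h1]
      apply le_antisymm
      · exact iSup_le fun m => ENNReal.rpow_le_rpow (le_iSup (fun k => H k x) m) hp0.le
      · have hmono : Monotone fun m => H m x := fun a b hab => hHmono hab x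
        have htend : Tendsto (fun m => H m x) atTop (nhds (⨆ m, H m x)) :=
          tendsto_atTop_iSup hmono
        have htend2 : Tendsto (fun m => H m x ^ p) atTop
            (nhds ((⨆ m, H m x) ^ p)) :=
          ((ENNReal.continuous_rpow_const (y := p)).tendsto _).comp htend
        exact le_of_tendsto htend2
          (Eventually.of_forall fun m => le_iSup (fun k => H k x ^ p) m)
    rw [← lintegral_iSup (fun m => (hHm m).pow_const _)
      (fun a b hab x => ENNReal.rpow_le_rpow (hHmono hab x) hp0.le)]
    exact lintegral_congr fun x => (hpt x).symm
  have hfin : ∫⁻ x, Φ x ^ p ∂μ ≤ R ^ p := by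
    rw [hsup]
    apply iSup_le
    intro m
    calc A m = (A m ^ (1/p)) ^ p := by
          rw [one_div, ENNReal.rpow_inv_rpow hp0.ne']
      _ ≤ R ^ p := ENNReal.rpow_le_rpow (key m) hp0.le
  calc (∫⁻ x, Φ x ^ p ∂μ) ^ (1/p) ≤ (R ^ p) ^ (1/p) :=
        ENNReal.rpow_le_rpow hfin (by positivity)
    _ = R := by rw [one_div, ENNReal.rpow_rpow_inv hp0.ne']

open MeasureTheory Filter Function Metric
open scoped ENNReal Topology

section helpers

variable {n : ℕ}
local notation "Evec" => EuclideanSpace ℝ (Fin n)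

/-- bounded + integrable implies MemLp for finite exponent. -/
theorem memLp_of_bdd {h : Evec → ℝ} (hm : AEStronglyMeasurable h volume)
    (hint : Integrable h (volume : Measure Evec)) {C : ℝ} (hC : ∀ x, |h x| ≤ C)
    {p : ℝ} (hp : 1 < p) : MemLp h (ENNReal.ofReal p) volume := by
  have hp0 : (0:ℝ) < p := by linarith
  have hq0 : (ENNReal.ofReal p) ≠ 0 := by simp [ENNReal.ofReal_pos.2 hp0, ne_of_gt]
  have hqt : (ENNReal.ofReal p) ≠ ⊤ := ENNReal.ofReal_ne_top
  refine ⟨hm, ?_⟩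
  rw [eLpNorm_eq_lintegral_rpow_enorm_toReal hq0 hqt]
  rw [ENNReal.toReal_ofReal hp0.le]
  have hC0 : 0 ≤ C := le_trans (abs_nonneg _) (hC 0)
  have key : ∀ x : Evec, (‖h x‖₊ : ℝ≥0∞) ^ p ≤ ENNReal.ofReal C ^ (p - 1) * ‖h x‖₊ := by
    intro x
    have h1 : (‖h x‖₊ : ℝ≥0∞) ^ p = (‖h x‖₊ : ℝ≥0∞) ^ (p-1) * ‖h x‖₊ := by
      have hh := ENNReal.rpow_add_of_nonneg (x := (‖h x‖₊ : ℝ≥0∞)) (p-1) 1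
        (by linarith) zero_le_one
      have h2 : p - 1 + 1 = p := by ring
      rw [h2] at hh
      rw [hh, ENNReal.rpow_one]
    rw [h1]
    apply mul_le_mul_left
    apply ENNReal.rpow_le_rpow _ (by linarith : (0:ℝ) ≤ p - 1)
    rw [← enorm_eq_nnnorm, ← ofReal_norm_eq_enorm]
    exact ENNReal.ofReal_le_ofReal (by simpa [Real.norm_eq_abs] using hC x)
  have hfin : ∫⁻ x, (‖h x‖₊ : ℝ≥0∞) ^ p ∂(volume : Measure Evec) < ⊤ := by
    calc ∫⁻ x, (‖h x‖₊ : ℝ≥0∞) ^ p ∂(volume : Measure Evec)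
        ≤ ∫⁻ x, ENNReal.ofReal C ^ (p - 1) * ‖h x‖₊ ∂volume := lintegral_mono key
      _ = ENNReal.ofReal C ^ (p - 1) * ∫⁻ x, (‖h x‖₊ : ℝ≥0∞) ∂volume := by
          rw [lintegral_const_mul' _ _ (by simp [ENNReal.rpow_lt_top_of_nonneg
            (by linarith : (0:ℝ) ≤ p - 1) ENNReal.ofReal_ne_top, ne_of_lt])]
      _ < ⊤ := ENNReal.mul_lt_top
          (ENNReal.rpow_lt_top_of_nonneg (by linarith) ENNReal.ofReal_ne_top)
          hint.2
  exact ENNReal.rpow_lt_top_of_nonneg (by positivity) hfin.ne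

/-- Packaged continuity of translation in Lp. -/
theorem translation_modulus {q : ℝ≥0∞} [Fact (1 ≤ q)] (hqt : q ≠ ⊤)
    {h : Evec → ℝ} (hh : MemLp h q (volume : Measure Evec)) :
    ∃ w : Evec → ℝ, Continuous w ∧ w 0 = 0 ∧
      (∀ a : Evec, eLpNorm (fun x => h x - h (x - a)) q volume = ENNReal.ofReal (w a)) ∧
      (∀ a : Evec, w a ≤ 2 * (eLpNorm h q volume).toReal) := by
  have pres : ∀ a : Evec, MeasurePreserving (fun x : Evec => x - a) volume volume :=
    fun a => measurePreserving_sub_right volume a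
  have hLp : Lp ℝ q (volume : Measure Evec) := hh.toLp h
  let K : C(Evec × Evec, Evec) := ⟨fun w => w.2 - w.1, by fun_prop⟩
  have hKa : ∀ (a x : Evec), (K.curry a) x = x - a := fun a x => rfl
  have pres' : ∀ a : Evec, MeasurePreserving (⇑(K.curry a)) volume volume := by
    intro a
    have : ⇑(K.curry a) = fun x : Evec => x - a := funext fun x => hKa a x
    rw [this]; exact pres a
  let Tr : Evec → Lp ℝ q (volume : Measure Evec) :=
    fun a => Lp.compMeasurePreserving (⇑(K.curry a)) (pres' a) (hh.toLp h)
  have hTrcont : Continuous Tr := by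
    have hK : Continuous fun a : Evec => ((ContinuousMap.curry K) a) :=
      (ContinuousMap.curry K).continuous
    have hmain := MeasureTheory.Lp.compMeasurePreserving_continuous
      (volume : Measure Evec) (volume : Measure Evec) ℝ (p := q) hqt
    have hpair : Continuous fun a : Evec =>
        ((hh.toLp h, ⟨(ContinuousMap.curry K) a, pres' a⟩) :
          Lp ℝ q (volume : Measure Evec) ×
            {f : C(Evec, Evec) // MeasurePreserving f volume volume}) :=
      (continuous_const.prodMk (hK.subtype_mk _))
    exact hmain.comp hpair
  have hnorm : ∀ a : Evec, ‖Tr a‖ = ‖hh.toLp h‖ := by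
    intro a
    have h0 : (Lp.compMeasurePreserving (⇑(K.curry a)) (pres' a))
        (0 : Lp ℝ q (volume : Measure Evec)) = 0 := map_zero _
    calc ‖Tr a‖ = dist (Tr a) 0 := (dist_zero_right _).symm
      _ = dist ((Lp.compMeasurePreserving (⇑(K.curry a)) (pres' a)) (hh.toLp h))
            ((Lp.compMeasurePreserving (⇑(K.curry a)) (pres' a)) 0) := by rw [h0]
      _ = dist (hh.toLp h) 0 :=
          (Lp.isometry_compMeasurePreserving (pres' a)).dist_eq _ _
      _ = ‖hh.toLp h‖ := dist_zero_right _
  have hcoe : ∀ a : Evec, (((hh.toLp h - Tr a : Lp ℝ q volume)) : Evec → ℝ)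
      =ᵐ[volume] fun x => h x - h (x - a) := by
    intro a
    have hcomp : ((hh.toLp h : Evec → ℝ) ∘ ⇑(K.curry a))
        =ᵐ[volume] (h ∘ ⇑(K.curry a)) :=
      (pres' a).quasiMeasurePreserving.ae_eq_comp hh.coeFn_toLp
    filter_upwards [Lp.coeFn_sub (hh.toLp h) (Tr a), hh.coeFn_toLp,
      Lp.coeFn_compMeasurePreserving (hh.toLp h) (pres' a), hcomp] with x h1 h2 h3 h4
    rw [h1]
    simp only [Pi.sub_apply, h2]
    have : (Tr a : Evec → ℝ) x = h (x - a) := by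
      rw [show (Tr a : Evec → ℝ) x
          = ((Lp.compMeasurePreserving (⇑(K.curry a)) (pres' a)) (hh.toLp h) : Evec → ℝ) x
        from rfl, h3]
      have h4' : ((hh.toLp h : Evec → ℝ) ∘ ⇑(K.curry a)) x = (h ∘ ⇑(K.curry a)) x := h4
      rw [show ((hh.toLp h : Evec → ℝ) ∘ fun x => (K.curry a) x) x
          = ((hh.toLp h : Evec → ℝ) ∘ ⇑(K.curry a)) x from rfl, h4']
      simp only [Function.comp_apply, hKa]
    rw [this]
  refine ⟨fun a => ‖hh.toLp h - Tr a‖, ?_, ?_, ?_, ?_⟩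
  · exact (continuous_const.sub hTrcont).norm
  · show ‖hh.toLp h - Tr 0‖ = 0
    have h5 : eLpNorm (((hh.toLp h - Tr 0 : Lp ℝ q volume)) : Evec → ℝ) q volume = 0 := by
      rw [eLpNorm_congr_ae (hcoe 0)]
      have h6 : (fun x : Evec => h x - h (x - 0)) =ᵐ[volume] (0 : Evec → ℝ) := by
        filter_upwards with x; simp
      rw [eLpNorm_congr_ae h6, eLpNorm_zero]
    rw [Lp.norm_def, h5]; simp
  · intro a
    show eLpNorm _ q volume = ENNReal.ofReal ‖hh.toLp h - Tr a‖
    rw [eLpNorm_congr_ae (hcoe a).symm, Lp.norm_def,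
      ENNReal.ofReal_toReal (Lp.eLpNorm_ne_top _)]
  · intro a
    show ‖hh.toLp h - Tr a‖ ≤ _
    calc ‖hh.toLp h - Tr a‖ ≤ ‖hh.toLp h‖ + ‖Tr a‖ := norm_sub_le _ _
      _ = 2 * ‖hh.toLp h‖ := by rw [hnorm a]; ring
      _ = 2 * (eLpNorm h q volume).toReal := by
          rw [Lp.norm_def, eLpNorm_congr_ae hh.coeFn_toLp]

/-- pick the first center in the list whose δ-ball contains y -/
noncomputable def pickC {X : Type*} [PseudoMetricSpace X] (x₀ : X) (δ : ℝ) : List X → X → X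
  | [] => fun _ => x₀
  | a :: tl => fun y => if dist y a < δ then a else pickC x₀ δ tl y

theorem pickC_measurable {X : Type*} [PseudoMetricSpace X] [MeasurableSpace X]
    [OpensMeasurableSpace X] (x₀ : X) (δ : ℝ) (l : List X) :
    Measurable (pickC x₀ δ l) := by
  induction l with
  | nil => exact measurable_const
  | cons a tl ih =>
      show Measurable fun y => if dist y a < δ then a else pickC x₀ δ tl y
      exact Measurable.ite (show MeasurableSet (ball a δ) from measurableSet_ball)
        measurable_const ih

theorem pickC_mem {X : Type*} [PseudoMetricSpace X] (x₀ : X) (δ : ℝ) (l : List X) (y : X) :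
    pickC x₀ δ l y ∈ x₀ :: l := by
  induction l with
  | nil => simp [pickC]
  | cons a tl ih =>
      show (if dist y a < δ then a else pickC x₀ δ tl y) ∈ _
      split_ifs with hy
      · simp
      · rcases List.mem_cons.1 ih with h | h
        · simp [h]
        · simp [List.mem_cons, h]
        
theorem pickC_close {X : Type*} [PseudoMetricSpace X] (x₀ : X) (δ : ℝ) (l : List X) (y : X)
    (hy : ∃ a ∈ l, dist y a < δ) : dist y (pickC x₀ δ l y) < δ := by
  induction l with
  | nil => simp at hy
  | cons a tl ih =>
      show dist y (if dist y a < δ then a else pickC x₀ δ tl y) < δ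
      split_ifs with h
      · exact h
      · apply ih
        rcases hy with ⟨b, hb, hbd⟩
        rcases List.mem_cons.1 hb with rfl | hb'
        · exact absurd hbd h
        · exact ⟨b, hb', hbd⟩

end helpers

open MeasureTheory Filter Metric Topology Function
open scoped ENNReal

set_option maxHeartbeats 1000000 in
/-- Theorem (c): if `1 < p < ∞`, `f` is a pdf in `L^p(ℝⁿ)`, and `g ∈ C₀(ℝⁿ)` is a pdf,
then for every `ε > 0` some finite location-scale mixture of `g` is within `ε` of `f`
in `L^p` norm. -/
theorem stmt_7 (n : ℕ) (p : ℝ) (hp : 1 < p) (f g : EuclideanSpace ℝ (Fin n) → ℝ)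
    (hf0 : ∀ x, 0 ≤ f x) (hfint : Integrable f) (hf1 : ∫ x, f x = 1)
    (hfp : MemLp f (ENNReal.ofReal p) volume)
    (hg0 : ∀ x, 0 ≤ g x) (hgint : Integrable g) (hg1 : ∫ x, g x = 1)
    (hgc : Continuous g)
    (hgC0 : Tendsto g (cocompact (EuclideanSpace ℝ (Fin n))) (𝓝 0))
    (ε : ℝ) (hε : 0 < ε) :
    ∃ (m : ℕ) (c : Fin m → ℝ) (μ : Fin m → EuclideanSpace ℝ (Fin n)) (σ : Fin m → ℝ),
      (∀ i, 0 < σ i) ∧ (∀ i, 0 ≤ c i) ∧ (∑ i, c i = 1) ∧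
      eLpNorm (fun x =>
          f x - ∑ i, c i * ((σ i) ^ n)⁻¹ * g ((σ i)⁻¹ • (x - μ i)))
        (ENNReal.ofReal p) volume < ENNReal.ofReal ε := by
  classical
  have hp0 : (0:ℝ) < p := by linarith
  set q : ℝ≥0∞ := ENNReal.ofReal p with hqdef
  have hq0 : q ≠ 0 := by
    simp only [hqdef, ne_eq, ENNReal.ofReal_eq_zero, not_le]; linarith
  have hqt : q ≠ ⊤ := ENNReal.ofReal_ne_top
  have hqr : q.toReal = p := ENNReal.toReal_ofReal hp0.le
  haveI : Fact (1 ≤ q) := ⟨by rw [hqdef]; exact ENNReal.one_le_ofReal.2 hp.le⟩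
  -- measurable nonneg replacement of f
  obtain ⟨fm, hfm_meas, hfm_nonneg, hfm_ae⟩ :
      ∃ fm : EuclideanSpace ℝ (Fin n) → ℝ,
        Measurable fm ∧ (∀ x, 0 ≤ fm x) ∧ f =ᵐ[volume] fm := by
    refine ⟨fun x => max (hfint.1.mk f x) 0,
      hfint.1.measurable_mk.max measurable_const, fun x => le_max_right _ _, ?_⟩
    filter_upwards [hfint.1.ae_eq_mk] with x hx
    rw [← hx, max_eq_left (hf0 x)]
  have hfmint : Integrable fm := hfint.congr hfm_ae
  have hfm1 : ∫ x, fm x = 1 := by rw [← integral_congr_ae hfm_ae, hf1]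
  have hfmp : MemLp fm q volume := hfp.ae_eq hfm_ae
  have hfmL1 : ∫⁻ x, (‖fm x‖₊ : ℝ≥0∞) ∂(volume : Measure (EuclideanSpace ℝ (Fin n))) = 1 := by
    have h1 : ∀ x, (‖fm x‖₊ : ℝ≥0∞) = ENNReal.ofReal (fm x) :=
      fun x => Real.enorm_eq_ofReal (hfm_nonneg x)
    simp_rw [h1]
    rw [← ofReal_integral_eq_lintegral_ofReal hfmint
      (Filter.Eventually.of_forall hfm_nonneg), hfm1, ENNReal.ofReal_one]
  -- bound for g
  obtain ⟨Cg, hCg0, hCg⟩ : ∃ C : ℝ, 0 < C ∧ ∀ x, |g x| ≤ C := by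
    have h1 : ∀ᶠ x in cocompact (EuclideanSpace ℝ (Fin n)), dist (g x) 0 < 1 :=
      hgC0 (Metric.ball_mem_nhds 0 one_pos)
    rw [Filter.eventually_iff, mem_cocompact] at h1
    obtain ⟨K, hK, hKsub⟩ := h1
    rcases K.eq_empty_or_nonempty with rfl | hne
    · refine ⟨1, one_pos, fun x => ?_⟩
      have hx : x ∈ (∅ : Set (EuclideanSpace ℝ (Fin n)))ᶜ := by simp
      have := hKsub hx
      simp only [Set.mem_setOf_eq, Real.dist_eq, sub_zero] at this
      exact this.le
    · obtain ⟨C, hC⟩ := hK.exists_bound_of_continuousOn hgc.continuousOn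
      refine ⟨max C 1, lt_of_lt_of_le one_pos (le_max_right _ _), fun x => ?_⟩
      by_cases hx : x ∈ K
      · exact le_trans (by simpa [Real.norm_eq_abs] using hC x hx) (le_max_left _ _)
      · have := hKsub hx
        simp only [Set.mem_setOf_eq, Real.dist_eq, sub_zero] at this
        exact le_trans this.le (le_max_right _ _)
  have hgL1 : ∫⁻ z, (‖g z‖₊ : ℝ≥0∞) ∂(volume : Measure (EuclideanSpace ℝ (Fin n))) < ⊤ :=
    hgint.2
  -- translation modulus for fm
  obtain ⟨w, hwc, hw0, hweq, hwbd⟩ := translation_modulus (n := n) hqt hfmp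
  -- choose σ
  obtain ⟨σ, hσ, hSσ⟩ : ∃ σ : ℝ, 0 < σ ∧
      ∫⁻ z, (‖g z‖₊ : ℝ≥0∞) * ENNReal.ofReal (w (σ • z))
        ∂(volume : Measure (EuclideanSpace ℝ (Fin n))) < ENNReal.ofReal (ε/2) := by
    have hbdd : ∀ (t : ℝ) (z : EuclideanSpace ℝ (Fin n)),
        (‖g z‖₊ : ℝ≥0∞) * ENNReal.ofReal (w (t • z))
          ≤ (‖g z‖₊ : ℝ≥0∞) * ENNReal.ofReal (2 * (eLpNorm fm q volume).toReal) :=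
      fun t z => mul_le_mul_right (ENNReal.ofReal_le_ofReal (hwbd _)) _
    have hmeasF : ∀ t : ℝ, Measurable fun z : EuclideanSpace ℝ (Fin n) =>
        (‖g z‖₊ : ℝ≥0∞) * ENNReal.ofReal (w (t • z)) := by
      intro t
      exact (hgc.measurable.nnnorm.coe_nnreal_ennreal).mul
        (ENNReal.measurable_ofReal.comp (hwc.measurable.comp (measurable_id.const_smul t)))
    have hboundfin : ∫⁻ z, (‖g z‖₊ : ℝ≥0∞)
        * ENNReal.ofReal (2 * (eLpNorm fm q volume).toReal)
        ∂(volume : Measure (EuclideanSpace ℝ (Fin n))) ≠ ⊤ := by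
      rw [lintegral_mul_const' _ _ ENNReal.ofReal_ne_top]
      exact (ENNReal.mul_lt_top hgL1 ENNReal.ofReal_lt_top).ne
    have hlim : ∀ z : EuclideanSpace ℝ (Fin n), Tendsto
        (fun k : ℕ => (‖g z‖₊ : ℝ≥0∞) * ENNReal.ofReal (w (((k:ℝ)+1)⁻¹ • z)))
        atTop (𝓝 0) := by
      intro z
      have h1 : Tendsto (fun k : ℕ => ((k:ℝ)+1)⁻¹) atTop (𝓝 0) := by
        have := tendsto_one_div_add_atTop_nhds_zero_nat (𝕜 := ℝ)
        simpa [one_div] using this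
      have h2 : Tendsto (fun k : ℕ => ((k:ℝ)+1)⁻¹ • z) atTop (𝓝 (0:EuclideanSpace ℝ (Fin n))) := by
        have := h1.smul_const z
        simpa [zero_smul] using this
      have h3 : Tendsto (fun k : ℕ => w (((k:ℝ)+1)⁻¹ • z)) atTop (𝓝 0) := by
        have := (hwc.tendsto 0).comp h2
        simpa [hw0, Function.comp_def] using this
      have h4 : Tendsto (fun k : ℕ => ENNReal.ofReal (w (((k:ℝ)+1)⁻¹ • z)))
          atTop (𝓝 0) := by
        have := (ENNReal.continuous_ofReal.tendsto 0).comp h3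
        simpa [Function.comp_def] using this
      have h5 := ENNReal.Tendsto.const_mul (a := (‖g z‖₊ : ℝ≥0∞)) h4
        (Or.inr ENNReal.coe_ne_top)
      simpa using h5
    have htendS : Tendsto (fun k : ℕ => ∫⁻ z, (‖g z‖₊ : ℝ≥0∞)
        * ENNReal.ofReal (w (((k:ℝ)+1)⁻¹ • z))
        ∂(volume : Measure (EuclideanSpace ℝ (Fin n)))) atTop (𝓝 0) := by
      have := tendsto_lintegral_of_dominated_convergence
        (F := fun k z => (‖g z‖₊ : ℝ≥0∞) * ENNReal.ofReal (w (((k:ℝ)+1)⁻¹ • z)))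
        (f := fun _ => 0)
        (fun z => (‖g z‖₊ : ℝ≥0∞) * ENNReal.ofReal (2 * (eLpNorm fm q volume).toReal))
        (fun k => hmeasF _) (fun k => Filter.Eventually.of_forall (hbdd _))
        hboundfin (Filter.Eventually.of_forall hlim)
      simpa using this
    have hpos : (0:ℝ≥0∞) < ENNReal.ofReal (ε/2) := ENNReal.ofReal_pos.2 (by linarith)
    obtain ⟨k, hk⟩ := (htendS.eventually (gt_mem_nhds hpos)).exists
    exact ⟨((k:ℝ)+1)⁻¹, by positivity, hk⟩
  -- the rescaled kernel G
  set G : EuclideanSpace ℝ (Fin n) → ℝ := fun x => ((σ:ℝ)^n)⁻¹ * g (σ⁻¹ • x) with hGdef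
  have hσn : (0:ℝ) < σ^n := by positivity
  have hGc : Continuous G := continuous_const.mul (hgc.comp (continuous_const_smul _))
  have hGint : Integrable G (volume : Measure (EuclideanSpace ℝ (Fin n))) := by
    have h1 : Integrable (fun x : EuclideanSpace ℝ (Fin n) => g (σ⁻¹ • x)) volume :=
      (integrable_comp_smul_iff volume g (inv_ne_zero hσ.ne')).2 hgint
    exact h1.const_mul _
  set CG : ℝ := (σ^n)⁻¹ * Cg with hCGdef
  have hGbd : ∀ t, |G t| ≤ CG := by
    intro t
    rw [hGdef, hCGdef]
    simp only []
    rw [abs_mul, abs_of_pos (by positivity : (0:ℝ) < (σ^n)⁻¹)]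
    exact mul_le_mul_of_nonneg_left (hCg _) (by positivity)
  have hGp : MemLp G q volume := by
    rw [hqdef]
    exact memLp_of_bdd hGc.aestronglyMeasurable hGint hGbd hp
  obtain ⟨wG, hwGc, hwG0, hwGeq, hwGbd⟩ := translation_modulus (n := n) hqt hGp
  set Γ : ℝ≥0∞ := eLpNorm G q volume with hΓdef
  have hΓt : Γ ≠ ⊤ := hGp.2.ne
  have hwGbd' : ∀ a : EuclideanSpace ℝ (Fin n), ENNReal.ofReal (wG a) ≤ 2 * Γ := by
    intro a
    calc ENNReal.ofReal (wG a) ≤ ENNReal.ofReal (2 * Γ.toReal) :=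
          ENNReal.ofReal_le_ofReal (hwGbd a)
      _ = 2 * Γ := by
          rw [ENNReal.ofReal_mul (by norm_num), ENNReal.ofReal_toReal hΓt]
          norm_num
  -- choose δ
  obtain ⟨δ, hδ0, hδ⟩ : ∃ δ : ℝ, 0 < δ ∧ ∀ a : EuclideanSpace ℝ (Fin n), ‖a‖ < δ →
      ENNReal.ofReal (wG a) ≤ ENNReal.ofReal (ε/8) := by
    have hcont : ContinuousAt wG 0 := hwGc.continuousAt
    rw [Metric.continuousAt_iff] at hcont
    obtain ⟨δ, hδ0, hδ'⟩ := hcont (ε/8) (by linarith)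
    refine ⟨δ, hδ0, fun a ha => ?_⟩
    have h1 : dist a 0 < δ := by simpa [dist_zero_right] using ha
    have h2 := hδ' h1
    rw [hwG0, Real.dist_eq, sub_zero] at h2
    exact ENNReal.ofReal_le_ofReal (le_trans (le_abs_self _) h2.le)
  -- choose R (tail bound)
  set η : ℝ≥0∞ := ENNReal.ofReal (ε/8) / (2 * Γ + 1) with hηdef
  have hΓfin : (2 * Γ + 1) ≠ ⊤ :=
    (ENNReal.add_lt_top.2 ⟨ENNReal.mul_lt_top (by norm_num) hΓt.lt_top,
        ENNReal.one_lt_top⟩).ne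
  have hη0 : 0 < η := by
    apply ENNReal.div_pos
    · simp only [ne_eq, ENNReal.ofReal_eq_zero, not_le]; linarith
    · exact hΓfin
  obtain ⟨R, hR⟩ : ∃ R : ℕ,
      ∫⁻ y in (closedBall (0:EuclideanSpace ℝ (Fin n)) (R:ℝ))ᶜ,
        (‖fm y‖₊ : ℝ≥0∞) ∂volume < η := by
    set μf : Measure (EuclideanSpace ℝ (Fin n)) :=
      volume.withDensity (fun y => (‖fm y‖₊ : ℝ≥0∞)) with hμf
    have hμf_apply : ∀ (sS : Set (EuclideanSpace ℝ (Fin n))), MeasurableSet sS →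
        μf sS = ∫⁻ y in sS, (‖fm y‖₊ : ℝ≥0∞) ∂volume :=
      fun sS hs => withDensity_apply _ hs
    have hμf_fin : μf (Set.univ) ≠ ⊤ := by
      rw [hμf_apply _ MeasurableSet.univ, Measure.restrict_univ, hfmL1]
      exact ENNReal.one_ne_top
    have hanti : Antitone (fun k : ℕ =>
        (closedBall (0:EuclideanSpace ℝ (Fin n)) (k:ℝ))ᶜ) := by
      intro a b hab
      exact Set.compl_subset_compl.2 (closedBall_subset_closedBall (by exact_mod_cast hab))
    have hempty : (⋂ k : ℕ, (closedBall (0:EuclideanSpace ℝ (Fin n)) (k:ℝ))ᶜ) = ∅ := by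
      ext x
      simp only [Set.mem_iInter, Set.mem_compl_iff, Set.mem_empty_iff_false, iff_false,
        not_forall, not_not]
      obtain ⟨k, hk⟩ := exists_nat_ge ‖x‖
      exact ⟨k, by simpa [mem_closedBall, dist_zero_right] using hk⟩
    have htend := tendsto_measure_iInter_atTop (μ := μf)
      (fun k => (measurableSet_closedBall.compl).nullMeasurableSet)
      hanti ⟨0, ne_top_of_le_ne_top hμf_fin (measure_mono (Set.subset_univ _))⟩
    rw [hempty] at htend
    simp only [measure_empty] at htend
    obtain ⟨R, hR⟩ := (htend.eventually (gt_mem_nhds hη0)).exists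
    refine ⟨R, ?_⟩
    rw [← hμf_apply _ measurableSet_closedBall.compl]
    exact hR
  set K : Set (EuclideanSpace ℝ (Fin n)) := closedBall 0 (R:ℝ) with hKdef
  have hKmeas : MeasurableSet K := measurableSet_closedBall
  -- finite cover of K by δ-balls
  obtain ⟨t, ht⟩ : ∃ t : Finset (EuclideanSpace ℝ (Fin n)), K ⊆ ⋃ a ∈ t, ball a δ := by
    obtain ⟨t, ht⟩ := (isCompact_closedBall (0:EuclideanSpace ℝ (Fin n)) (R:ℝ)).elim_finite_subcover
      (fun a : EuclideanSpace ℝ (Fin n) => ball a δ) (fun a => isOpen_ball)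
      (fun x _ => Set.mem_iUnion.2 ⟨x, mem_ball_self hδ0⟩)
    exact ⟨t, ht⟩
  set T : EuclideanSpace ℝ (Fin n) → EuclideanSpace ℝ (Fin n) :=
    pickC 0 δ t.toList with hTdef
  have hT_meas : Measurable T := pickC_measurable _ _ _
  have hTK : ∀ y ∈ K, dist y (T y) < δ := by
    intro y hy
    apply pickC_close
    obtain ⟨a, hat, hya⟩ := Set.mem_iUnion₂.1 (ht hy)
    exact ⟨a, (Finset.mem_toList).2 hat, by simpa [mem_ball] using hya⟩
  set s : Finset (EuclideanSpace ℝ (Fin n)) := insert 0 t with hsdef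
  have hTmem : ∀ y, T y ∈ s := by
    intro y
    rcases List.mem_cons.1 (pickC_mem 0 δ t.toList y) with h | h
    · have h' : T y = 0 := h
      rw [h']; exact Finset.mem_insert_self _ _
    · have h' : T y ∈ t.toList := h
      exact Finset.mem_insert_of_mem ((Finset.mem_toList).1 h')
  set m : ℕ := s.card with hmdef
  set e : {x // x ∈ s} ≃ Fin m := s.equivFin with hedef
  set v : Fin m → EuclideanSpace ℝ (Fin n) := fun i => (e.symm i : EuclideanSpace ℝ (Fin n))
    with hvdef
  have hv_inj : Function.Injective v := fun i j h => e.symm.injective (Subtype.ext h)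
  set i₀ : EuclideanSpace ℝ (Fin n) → Fin m := fun y => e ⟨T y, hTmem y⟩ with hi₀def
  have hvi₀ : ∀ y, v (i₀ y) = T y := by
    intro y
    rw [hvdef, hi₀def]
    simp only [Equiv.symm_apply_apply]
  set A : Fin m → Set (EuclideanSpace ℝ (Fin n)) := fun i => T ⁻¹' {v i} with hAdef
  have hAmeas : ∀ i, MeasurableSet (A i) := fun i => hT_meas (measurableSet_singleton _)
  have hAy : ∀ y, y ∈ A (i₀ y) := by
    intro y
    simp only [hAdef, Set.mem_preimage, Set.mem_singleton_iff]
    exact (hvi₀ y).symm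
  have hnotA : ∀ y j, j ≠ i₀ y → y ∉ A j := by
    intro y j hj hy
    simp only [hAdef, Set.mem_preimage, Set.mem_singleton_iff] at hy
    exact hj (hv_inj (by rw [← hy, hvi₀ y]))
  have hsum : ∀ (y : EuclideanSpace ℝ (Fin n)) (ρ : Fin m → EuclideanSpace ℝ (Fin n) → ℝ),
      ∑ i, (A i).indicator (ρ i) y = ρ (i₀ y) y := by
    intro y ρ
    rw [Finset.sum_eq_single (i₀ y)
      (fun j _ hj => Set.indicator_of_notMem (hnotA y j hj) _)
      (fun h => absurd (Finset.mem_univ _) h)]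
    exact Set.indicator_of_mem (hAy y) _
  set c : Fin m → ℝ := fun i => ∫ y in A i, fm y with hcdef
  have hc0 : ∀ i, 0 ≤ c i := fun i => integral_nonneg fun y => hfm_nonneg y
  have hc1 : ∑ i, c i = 1 := by
    calc ∑ i, c i = ∑ i, ∫ y, (A i).indicator fm y :=
          Finset.sum_congr rfl fun i _ => (integral_indicator (hAmeas i)).symm
      _ = ∫ y, ∑ i, (A i).indicator fm y :=
          (integral_finset_sum _ fun i _ => hfmint.indicator (hAmeas i)).symm
      _ = ∫ y, fm y := integral_congr_ae
          (Filter.Eventually.of_forall fun y => hsum y (fun _ => fm))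
      _ = 1 := hfm1
  -- the mixture M and pivot P
  set M : EuclideanSpace ℝ (Fin n) → ℝ := fun x => ∑ i, c i * G (x - v i) with hMdef
  set P : EuclideanSpace ℝ (Fin n) → ℝ := fun x => ∫ y, fm y * G (x - y) with hPdef
  have hbdd_int : ∀ u : EuclideanSpace ℝ (Fin n) → ℝ, Measurable u → (∀ y, |u y| ≤ CG) →
      Integrable (fun y => fm y * u y) (volume : Measure (EuclideanSpace ℝ (Fin n))) := by
    intro u hu hb
    have heq : (fun y => fm y * u y) = fun y => u y * fm y :=
      funext fun y => mul_comm _ _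
    rw [heq]
    exact hfmint.bdd_mul hu.aestronglyMeasurable
      (Filter.Eventually.of_forall fun y => by simpa [Real.norm_eq_abs] using hb y)
  have hM : ∀ x, M x = ∫ y, fm y * G (x - T y) := by
    intro x
    calc M x = ∑ i, c i * G (x - v i) := rfl
      _ = ∑ i, ∫ y in A i, fm y * G (x - v i) := by
          refine Finset.sum_congr rfl fun i _ => ?_
          rw [integral_mul_const]
      _ = ∑ i, ∫ y, (A i).indicator (fun y => fm y * G (x - v i)) y := by
          refine Finset.sum_congr rfl fun i _ => ?_
          rw [integral_indicator (hAmeas i)]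
      _ = ∫ y, ∑ i, (A i).indicator (fun y => fm y * G (x - v i)) y :=
          (integral_finset_sum _ fun i _ =>
            (hfmint.mul_const _).indicator (hAmeas i)).symm
      _ = ∫ y, fm y * G (x - T y) := by
          refine integral_congr_ae (Filter.Eventually.of_forall fun y => ?_)
          show ∑ i, (A i).indicator (fun y => fm y * G (x - v i)) y = fm y * G (x - T y)
          rw [hsum y (fun i y => fm y * G (x - v i)), hvi₀ y]
  have hPM : ∀ x, P x - M x = ∫ y, fm y * (G (x - y) - G (x - T y)) := by
    intro x
    have hu1 : Measurable (fun y : EuclideanSpace ℝ (Fin n) => G (x - y)) :=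
      hGc.measurable.comp (measurable_const.sub measurable_id)
    have hu2 : Measurable (fun y : EuclideanSpace ℝ (Fin n) => G (x - T y)) :=
      hGc.measurable.comp (measurable_const.sub hT_meas)
    have h1 : Integrable (fun y => fm y * G (x - y)) volume :=
      hbdd_int _ hu1 (fun y => hGbd _)
    have h2 : Integrable (fun y => fm y * G (x - T y)) volume :=
      hbdd_int _ hu2 (fun y => hGbd _)
    rw [hM x]
    show (∫ y, fm y * G (x - y)) - (∫ y, fm y * G (x - T y))
      = ∫ y, fm y * (G (x - y) - G (x - T y))
    rw [← integral_sub h1 h2]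
    congr 1
    funext y
    ring
  -- measurability of P and M
  have hPmeas : Measurable P := by
    have h1 : StronglyMeasurable fun z : (EuclideanSpace ℝ (Fin n)) × (EuclideanSpace ℝ (Fin n)) =>
        fm z.2 * G (z.1 - z.2) :=
      ((hfm_meas.comp measurable_snd).mul
        (hGc.measurable.comp (measurable_fst.sub measurable_snd))).stronglyMeasurable
    exact h1.integral_prod_right'.measurable
  have hMcont : Continuous M := by
    apply continuous_finset_sum
    intro i _
    exact continuous_const.mul (hGc.comp (continuous_id.sub continuous_const))
  -- Estimate 2 : eLpNorm (P - M) ≤ ε/4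
  have he2 : eLpNorm (fun x => P x - M x) q volume ≤ ENNReal.ofReal (ε/4) := by
    have hptw : ∀ x, (‖P x - M x‖₊ : ℝ≥0∞)
        ≤ ∫⁻ y, (‖fm y‖₊ : ℝ≥0∞) * (‖G (x - y) - G (x - T y)‖₊ : ℝ≥0∞) ∂volume := by
      intro x
      rw [hPM x]
      refine le_trans (enorm_integral_le_lintegral_enorm _) (le_of_eq ?_)
      apply lintegral_congr
      intro y
      rw [enorm_eq_nnnorm, nnnorm_mul, ENNReal.coe_mul]
    have hψmeas : Measurable (uncurry fun (x y : EuclideanSpace ℝ (Fin n)) =>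
        (‖G (x - y) - G (x - T y)‖₊ : ℝ≥0∞)) := by
      refine Measurable.coe_nnreal_ennreal (Measurable.nnnorm ?_)
      exact (hGc.measurable.comp (measurable_fst.sub measurable_snd)).sub
        (hGc.measurable.comp (measurable_fst.sub (hT_meas.comp measurable_snd)))
    have hmink := mink_aux (μ := (volume : Measure (EuclideanSpace ℝ (Fin n))))
      (ν := (volume : Measure (EuclideanSpace ℝ (Fin n))))
      hp (fun y => (‖fm y‖₊ : ℝ≥0∞))
      (fun x y => (‖G (x - y) - G (x - T y)‖₊ : ℝ≥0∞))
      hfm_meas.nnnorm.coe_nnreal_ennreal hψmeas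
    have hinner : ∀ y : EuclideanSpace ℝ (Fin n),
        (∫⁻ x, (‖G (x - y) - G (x - T y)‖₊ : ℝ≥0∞) ^ p ∂volume) ^ (1/p)
          = ENNReal.ofReal (wG (T y - y)) := by
      intro y
      have h1 : (fun x : EuclideanSpace ℝ (Fin n) => G (x - y) - G (x - T y))
          = (fun u => G u - G (u - (T y - y))) ∘ (fun x => x - y) := by
        funext x
        simp only [Function.comp_apply, sub_sub_sub_cancel_right]
      have h2 : eLpNorm (fun x : EuclideanSpace ℝ (Fin n) => G (x - y) - G (x - T y)) q volume
          = eLpNorm (fun u : EuclideanSpace ℝ (Fin n) => G u - G (u - (T y - y))) q volume := by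
        rw [h1]
        exact eLpNorm_comp_measurePreserving
          ((hGc.measurable.sub
            (hGc.measurable.comp (measurable_id.sub_const _))).aestronglyMeasurable)
          (measurePreserving_sub_right volume y)
      have h3 := hwGeq (T y - y)
      rw [← h3, ← h2, eLpNorm_eq_lintegral_rpow_enorm_toReal hq0 hqt, hqr]; rfl
    calc eLpNorm (fun x => P x - M x) q volume
        = (∫⁻ x, (‖P x - M x‖₊ : ℝ≥0∞) ^ p ∂volume) ^ (1/p) := by
          rw [eLpNorm_eq_lintegral_rpow_enorm_toReal hq0 hqt, hqr]; rfl
      _ ≤ (∫⁻ x, (∫⁻ y, (‖fm y‖₊ : ℝ≥0∞)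
            * (‖G (x - y) - G (x - T y)‖₊ : ℝ≥0∞) ∂volume) ^ p ∂volume) ^ (1/p) := by
          apply ENNReal.rpow_le_rpow _ (by positivity)
          exact lintegral_mono fun x => ENNReal.rpow_le_rpow (hptw x) hp0.le
      _ ≤ ∫⁻ y, (‖fm y‖₊ : ℝ≥0∞) * (∫⁻ x, (‖G (x - y) - G (x - T y)‖₊ : ℝ≥0∞) ^ p
            ∂volume) ^ (1/p) ∂volume := hmink
      _ = ∫⁻ y, (‖fm y‖₊ : ℝ≥0∞) * ENNReal.ofReal (wG (T y - y)) ∂volume :=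
          lintegral_congr fun y => by rw [hinner y]
      _ = (∫⁻ y in K, (‖fm y‖₊ : ℝ≥0∞) * ENNReal.ofReal (wG (T y - y)) ∂volume)
          + ∫⁻ y in Kᶜ, (‖fm y‖₊ : ℝ≥0∞) * ENNReal.ofReal (wG (T y - y)) ∂volume :=
          (lintegral_add_compl _ hKmeas).symm
      _ ≤ ENNReal.ofReal (ε/8) + ENNReal.ofReal (ε/8) := by
          apply add_le_add
          · calc ∫⁻ y in K, (‖fm y‖₊ : ℝ≥0∞) * ENNReal.ofReal (wG (T y - y)) ∂volume
                ≤ ∫⁻ y in K, (‖fm y‖₊ : ℝ≥0∞) * ENNReal.ofReal (ε/8) ∂volume := by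
                  apply setLIntegral_mono (hfm_meas.nnnorm.coe_nnreal_ennreal.mul measurable_const)
                  intro y hy
                  apply mul_le_mul_right
                  apply hδ
                  have h9 := hTK y hy
                  rw [← dist_eq_norm, dist_comm]
                  exact h9
              _ = (∫⁻ y in K, (‖fm y‖₊ : ℝ≥0∞) ∂volume) * ENNReal.ofReal (ε/8) := by
                  rw [lintegral_mul_const _ hfm_meas.nnnorm.coe_nnreal_ennreal]
              _ ≤ 1 * ENNReal.ofReal (ε/8) := by
                  apply mul_le_mul_left
                  rw [← hfmL1]
                  exact setLIntegral_le_lintegral _ _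
              _ = ENNReal.ofReal (ε/8) := one_mul _
          · calc ∫⁻ y in Kᶜ, (‖fm y‖₊ : ℝ≥0∞) * ENNReal.ofReal (wG (T y - y)) ∂volume
                ≤ ∫⁻ y in Kᶜ, (‖fm y‖₊ : ℝ≥0∞) * (2 * Γ) ∂volume := by
                  apply setLIntegral_mono (hfm_meas.nnnorm.coe_nnreal_ennreal.mul measurable_const)
                  intro y _
                  exact mul_le_mul_right (hwGbd' _) _
              _ = (∫⁻ y in Kᶜ, (‖fm y‖₊ : ℝ≥0∞) ∂volume) * (2 * Γ) := by
                  rw [lintegral_mul_const _ hfm_meas.nnnorm.coe_nnreal_ennreal]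
              _ ≤ η * (2 * Γ) := mul_le_mul_left hR.le _
              _ ≤ η * (2 * Γ + 1) := mul_le_mul_right le_self_add _
              _ = (2 * Γ + 1) * η := mul_comm _ _
              _ = ENNReal.ofReal (ε/8) := by
                  rw [hηdef]
                  exact ENNReal.mul_div_cancel
                    (lt_of_lt_of_le zero_lt_one le_add_self).ne' hΓfin
      _ = ENNReal.ofReal (ε/4) := by
          rw [← ENNReal.ofReal_add (by linarith) (by linarith)]
          congr 1
          ring
  -- Estimate 1 : eLpNorm (fm - P) < ε/2
  have hsec : ∀ᵐ x ∂(volume : Measure (EuclideanSpace ℝ (Fin n))),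
      Integrable (fun z => g z * fm (x - σ • z)) volume := by
    have hJmeasfun : Measurable (fun z : (EuclideanSpace ℝ (Fin n)) × (EuclideanSpace ℝ (Fin n)) =>
        (‖g z.2‖₊ : ℝ≥0∞) * (‖fm (z.1 - σ • z.2)‖₊ : ℝ≥0∞)) :=
      ((hgc.measurable.comp measurable_snd).nnnorm.coe_nnreal_ennreal).mul
        ((hfm_meas.comp (measurable_fst.sub (measurable_snd.const_smul σ))).nnnorm.coe_nnreal_ennreal)
    have hJmeas : Measurable fun x : EuclideanSpace ℝ (Fin n) =>
        ∫⁻ z, (‖g z‖₊ : ℝ≥0∞) * (‖fm (x - σ • z)‖₊ : ℝ≥0∞) ∂volume :=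
      Measurable.lintegral_prod_right' hJmeasfun
    have hJfin : ∫⁻ x, (∫⁻ z, (‖g z‖₊ : ℝ≥0∞) * (‖fm (x - σ • z)‖₊ : ℝ≥0∞) ∂volume)
        ∂(volume : Measure (EuclideanSpace ℝ (Fin n))) < ⊤ := by
      rw [lintegral_lintegral_swap hJmeasfun.aemeasurable]
      have heval : ∀ z : EuclideanSpace ℝ (Fin n),
          ∫⁻ x, (‖g z‖₊ : ℝ≥0∞) * (‖fm (x - σ • z)‖₊ : ℝ≥0∞) ∂volume
            = (‖g z‖₊ : ℝ≥0∞) := by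
        intro z
        rw [lintegral_const_mul' _ _ ENNReal.coe_ne_top]
        have h1 : ∫⁻ x, (‖fm (x - σ • z)‖₊ : ℝ≥0∞)
            ∂(volume : Measure (EuclideanSpace ℝ (Fin n))) = 1 := by
          rw [(measurePreserving_sub_right volume (σ • z)).lintegral_comp hfm_meas.nnnorm.coe_nnreal_ennreal]
          exact hfmL1
        rw [h1, mul_one]
      rw [lintegral_congr heval]
      exact hgL1
    filter_upwards [ae_lt_top hJmeas hJfin.ne] with x hx
    refine ⟨(hgc.measurable.mul
      (hfm_meas.comp (measurable_const.sub (measurable_id.const_smul σ)))).aestronglyMeasurable, ?_⟩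
    rw [hasFiniteIntegral_def]
    calc ∫⁻ z, (‖g z * fm (x - σ • z)‖₊ : ℝ≥0∞) ∂volume
        = ∫⁻ z, (‖g z‖₊ : ℝ≥0∞) * (‖fm (x - σ • z)‖₊ : ℝ≥0∞) ∂volume := by
          apply lintegral_congr
          intro z
          rw [nnnorm_mul, ENNReal.coe_mul]
      _ < ⊤ := hx
  have hPalt : ∀ x, P x = ∫ z, g z * fm (x - σ • z) := by
    intro x
    have hmp : MeasurePreserving (fun u : EuclideanSpace ℝ (Fin n) => x - u) volume volume := by
      have heq : (fun u : EuclideanSpace ℝ (Fin n) => x - u)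
          = (fun v : EuclideanSpace ℝ (Fin n) => x + v) ∘ (fun u => -u) :=
        funext fun u => by simp [sub_eq_add_neg]
      rw [heq]
      exact (measurePreserving_add_left volume x).comp (Measure.measurePreserving_neg volume)
    have hemb : MeasurableEmbedding (fun u : EuclideanSpace ℝ (Fin n) => x - u) :=
      (Homeomorph.subLeft x).measurableEmbedding
    have hcov1 : P x = ∫ u, fm (x - u) * G u := by
      have h0 := MeasurePreserving.integral_comp hmp hemb (fun y => fm y * G (x - y))
      rw [hPdef]
      simp only []
      rw [← h0]
      congr 1
      funext u
      rw [sub_sub_cancel]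
    have hGσ : ∀ z : EuclideanSpace ℝ (Fin n), G (σ • z) = (σ^n)⁻¹ * g z := by
      intro z
      rw [hGdef]
      simp only []
      rw [smul_smul, inv_mul_cancel₀ hσ.ne', one_smul]
    have hcov2 : ∫ z, fm (x - σ • z) * G (σ • z) = ((σ:ℝ)^n)⁻¹ • ∫ u, fm (x - u) * G u := by
      have h0 := Measure.integral_comp_smul (volume : Measure (EuclideanSpace ℝ (Fin n)))
        (fun u => fm (x - u) * G u) σ
      rw [h0, finrank_euclideanSpace_fin]
      congr 1
      rw [abs_of_pos (by positivity)]
    have hIeq : ∫ u, fm (x - u) * G u = (σ^n) * ∫ z, fm (x - σ • z) * G (σ • z) := by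
      rw [hcov2, smul_eq_mul, ← mul_assoc, mul_inv_cancel₀ hσn.ne', one_mul]
    have hIeq2 : ∫ z, fm (x - σ • z) * G (σ • z)
        = (σ^n)⁻¹ * ∫ z, g z * fm (x - σ • z) := by
      have h1 : (fun z => fm (x - σ • z) * G (σ • z))
          = fun z => (σ^n)⁻¹ * (g z * fm (x - σ • z)) := by
        funext z
        rw [hGσ z]
        ring
      rw [h1, integral_const_mul]
    rw [hcov1, hIeq, hIeq2, ← mul_assoc, mul_inv_cancel₀ hσn.ne', one_mul]
  have hrep : ∀ᵐ x ∂(volume : Measure (EuclideanSpace ℝ (Fin n))),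
      fm x - P x = ∫ z, g z * (fm x - fm (x - σ • z)) := by
    filter_upwards [hsec] with x hx
    have h1 : fm x = ∫ z, g z * fm x := by rw [integral_mul_const, hg1, one_mul]
    have h2 : fm x - P x = (∫ z, g z * fm x ∂(volume : Measure (EuclideanSpace ℝ (Fin n))))
        - ∫ z, g z * fm (x - σ • z) := by
      rw [hPalt x, ← h1]
    rw [h2, ← integral_sub (hgint.mul_const (fm x)) hx]
    congr 1
    funext z
    ring
  have he1 : eLpNorm (fun x => fm x - P x) q volume < ENNReal.ofReal (ε/2) := by
    have hptw1 : ∀ᵐ x ∂(volume : Measure (EuclideanSpace ℝ (Fin n))),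
        (‖fm x - P x‖₊ : ℝ≥0∞)
          ≤ ∫⁻ z, (‖g z‖₊ : ℝ≥0∞) * (‖fm x - fm (x - σ • z)‖₊ : ℝ≥0∞) ∂volume := by
      filter_upwards [hrep] with x hx
      rw [hx]
      refine le_trans (enorm_integral_le_lintegral_enorm _)
        (le_of_eq (lintegral_congr fun z => ?_))
      rw [enorm_eq_nnnorm, nnnorm_mul, ENNReal.coe_mul]
    have hψ1meas : Measurable (uncurry fun (x z : EuclideanSpace ℝ (Fin n)) =>
        (‖fm x - fm (x - σ • z)‖₊ : ℝ≥0∞)) :=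
      ((hfm_meas.comp measurable_fst).sub
        (hfm_meas.comp (measurable_fst.sub (measurable_snd.const_smul σ)))).nnnorm.coe_nnreal_ennreal
    have hmink1 := mink_aux (μ := (volume : Measure (EuclideanSpace ℝ (Fin n))))
      (ν := (volume : Measure (EuclideanSpace ℝ (Fin n))))
      hp (fun z => (‖g z‖₊ : ℝ≥0∞))
      (fun x z => (‖fm x - fm (x - σ • z)‖₊ : ℝ≥0∞))
      hgc.measurable.nnnorm.coe_nnreal_ennreal hψ1meas
    have hinner1 : ∀ z : EuclideanSpace ℝ (Fin n),
        (∫⁻ x, (‖fm x - fm (x - σ • z)‖₊ : ℝ≥0∞) ^ p ∂volume) ^ (1/p)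
          = ENNReal.ofReal (w (σ • z)) := by
      intro z
      have h3 := hweq (σ • z)
      rw [← h3, eLpNorm_eq_lintegral_rpow_enorm_toReal hq0 hqt, hqr]; rfl
    calc eLpNorm (fun x => fm x - P x) q volume
        = (∫⁻ x, (‖fm x - P x‖₊ : ℝ≥0∞) ^ p ∂volume) ^ (1/p) := by
          rw [eLpNorm_eq_lintegral_rpow_enorm_toReal hq0 hqt, hqr]; rfl
      _ ≤ (∫⁻ x, (∫⁻ z, (‖g z‖₊ : ℝ≥0∞)
            * (‖fm x - fm (x - σ • z)‖₊ : ℝ≥0∞) ∂volume) ^ p ∂volume) ^ (1/p) := by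
          apply ENNReal.rpow_le_rpow _ (by positivity)
          exact lintegral_mono_ae (hptw1.mono fun x hx => ENNReal.rpow_le_rpow hx hp0.le)
      _ ≤ ∫⁻ z, (‖g z‖₊ : ℝ≥0∞) * (∫⁻ x, (‖fm x - fm (x - σ • z)‖₊ : ℝ≥0∞) ^ p
            ∂volume) ^ (1/p) ∂volume := hmink1
      _ = ∫⁻ z, (‖g z‖₊ : ℝ≥0∞) * ENNReal.ofReal (w (σ • z)) ∂volume :=
          lintegral_congr fun z => by rw [hinner1 z]
      _ < ENNReal.ofReal (ε/2) := hSσ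
  -- triangle inequality and conclusion
  have htri : eLpNorm (fun x => fm x - M x) q volume
      ≤ eLpNorm (fun x => fm x - P x) q volume + eLpNorm (fun x => P x - M x) q volume := by
    have heq : (fun x => fm x - M x)
        = (fun x => fm x - P x) + (fun x => P x - M x) := by
      funext x
      simp only [Pi.add_apply]
      ring
    rw [heq]
    exact eLpNorm_add_le (hfm_meas.sub hPmeas).aestronglyMeasurable
      ((hPmeas.sub hMcont.measurable).aestronglyMeasurable) Fact.out
  refine ⟨m, c, v, fun _ => σ, fun _ => hσ, hc0, hc1, ?_⟩
  have hgoal_eq : (fun x => f x - ∑ i, c i * ((σ:ℝ)^n)⁻¹ * g (σ⁻¹ • (x - v i)))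
      =ᵐ[volume] fun x => fm x - M x := by
    filter_upwards [hfm_ae] with x hx
    rw [hx, hMdef]
    simp only []
    congr 1
    refine Finset.sum_congr rfl fun i _ => ?_
    rw [mul_assoc]
  rw [eLpNorm_congr_ae hgoal_eq]
  calc eLpNorm (fun x => fm x - M x) q volume
      ≤ eLpNorm (fun x => fm x - P x) q volume + eLpNorm (fun x => P x - M x) q volume := htri
    _ ≤ ENNReal.ofReal (ε/2) + ENNReal.ofReal (ε/4) := add_le_add he1.le he2
    _ = ENNReal.ofReal (3*ε/4) := by
        rw [← ENNReal.ofReal_add (by linarith) (by linarith)]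
        congr 1
        ring
    _ < ENNReal.ofReal ε := (ENNReal.ofReal_lt_ofReal_iff hε).2 (by linarith)
end

section
/- Define g : ℝ → ℝ by g(x) = 0 for x < 0 and g(x) = Σ_{i=1}^∞ (2^{2i}/i)[(x − i + 1)^{2i} 1_{[i−1, i−1/2)}(x) + (x − i)^{2i} 1_{[i−1/2, i)}(x)] for x ≥ 0. Then g is continuous, integrable (g ∈ L¹(ℝ)), vanishes at infinity (g ∈ C₀(ℝ)), but g is not in Wiener's algebra 𝒲, i.e., Σ_{y ∈ ℤ} sup_{x ∈ [0,1]} |g(x + y)| = ∞. -/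
open MeasureTheory Filter Metric Topology

/-- The function of the counterexample: `g(x) = 0` for `x < 0` and, for `x ≥ 0`,
`g(x) = Σ_{j=1}^∞ (2^{2j}/j) [(x−j+1)^{2j} 1_{[j−1,j−1/2)}(x) + (x−j)^{2j} 1_{[j−1/2,j)}(x)]`
(written below with `j = i + 1`, summing over `i : ℕ`). -/
noncomputable def gCounter : ℝ → ℝ := fun x =>
  if x < 0 then 0
  else ∑' i : ℕ,
    ((2 : ℝ) ^ (2 * (i + 1)) / (i + 1 : ℝ)) *
      ((x - i) ^ (2 * (i + 1)) * Set.indicator (Set.Ico (i : ℝ) ((i : ℝ) + 1 / 2)) 1 x +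
        (x - (i + 1)) ^ (2 * (i + 1)) *
          Set.indicator (Set.Ico ((i : ℝ) + 1 / 2) ((i : ℝ) + 1)) 1 x)

/-- The summand -/
noncomputable def gTerm (i : ℕ) (x : ℝ) : ℝ :=
    ((2 : ℝ) ^ (2 * (i + 1)) / (i + 1 : ℝ)) *
      ((x - i) ^ (2 * (i + 1)) * Set.indicator (Set.Ico (i : ℝ) ((i : ℝ) + 1 / 2)) 1 x +
        (x - (i + 1)) ^ (2 * (i + 1)) *
          Set.indicator (Set.Ico ((i : ℝ) + 1 / 2) ((i : ℝ) + 1)) 1 x)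

lemma gCounter_eq_term (i : ℕ) (x : ℝ) (hx : x ∈ Set.Ico (i : ℝ) ((i : ℝ) + 1)) :
    gCounter x = gTerm i x := by
  obtain ⟨h1, h2⟩ := hx
  have hx0 : ¬ x < 0 := by
    push_neg
    exact le_trans (by positivity) h1
  rw [gCounter, if_neg hx0]
  exact tsum_eq_single i (fun j hj => by
    have hji : j < i ∨ i < j := hj.lt_or_gt
    have hz1 : Set.indicator (Set.Ico (j : ℝ) ((j : ℝ) + 1 / 2)) (1 : ℝ → ℝ) x = 0 := by
      apply Set.indicator_of_notMem
      rintro ⟨a, b⟩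
      rcases hji with h | h
      · have : (j : ℝ) + 1 ≤ i := by exact_mod_cast Nat.succ_le_of_lt h
        linarith
      · have : (i : ℝ) + 1 ≤ j := by exact_mod_cast Nat.succ_le_of_lt h
        linarith
    have hz2 : Set.indicator (Set.Ico ((j : ℝ) + 1 / 2) ((j : ℝ) + 1)) (1 : ℝ → ℝ) x = 0 := by
      apply Set.indicator_of_notMem
      rintro ⟨a, b⟩
      rcases hji with h | h
      · have : (j : ℝ) + 1 ≤ i := by exact_mod_cast Nat.succ_le_of_lt h
        linarith
      · have : (i : ℝ) + 1 ≤ j := by exact_mod_cast Nat.succ_le_of_lt h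
        linarith
    rw [hz1, hz2]; ring)

/-- closed form on `Icc n (n+1)` -/
lemma gCounter_eq_min (i : ℕ) (x : ℝ) (hx : x ∈ Set.Icc (i : ℝ) ((i : ℝ) + 1)) :
    gCounter x = ((2 : ℝ) ^ (2 * (i + 1)) / (i + 1 : ℝ)) *
      (min (x - i) ((i : ℝ) + 1 - x)) ^ (2 * (i + 1)) := by
  obtain ⟨h1, h2⟩ := hx
  rcases eq_or_lt_of_le h2 with rfl | h2
  · have hx' : (i : ℝ) + 1 ∈ Set.Ico ((i + 1 : ℕ) : ℝ) (((i + 1 : ℕ) : ℝ) + 1) := by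
      constructor <;> [push_cast; push_cast] <;> linarith
    rw [gCounter_eq_term (i + 1) _ hx']
    have : min ((i : ℝ) + 1 - i) ((i : ℝ) + 1 - ((i : ℝ) + 1)) = 0 := by
      rw [min_eq_right] <;> norm_num
    rw [this]
    have hmem : (i : ℝ) + 1 ∈ Set.Ico (((i + 1 : ℕ)) : ℝ) (((i + 1 : ℕ) : ℝ) + 1 / 2) := by
      constructor <;> [push_cast; push_cast] <;> linarith
    have hnmem : (i : ℝ) + 1 ∉ Set.Ico ((((i + 1 : ℕ)) : ℝ) + 1 / 2) (((i + 1 : ℕ) : ℝ) + 1) := by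
      rintro ⟨a, b⟩; push_cast at a; linarith
    rw [gTerm, Set.indicator_of_mem hmem, Set.indicator_of_notMem hnmem, Pi.one_apply]
    push_cast
    ring_nf
  · rw [gCounter_eq_term i x ⟨h1, h2⟩, gTerm]
    rcases lt_or_ge x ((i : ℝ) + 1 / 2) with hc | hc
    · have hmem : x ∈ Set.Ico ((i : ℝ)) ((i : ℝ) + 1 / 2) := ⟨h1, hc⟩
      have hnmem : x ∉ Set.Ico ((i : ℝ) + 1 / 2) ((i : ℝ) + 1) := by
        rintro ⟨a, b⟩; linarith
      rw [Set.indicator_of_mem hmem, Set.indicator_of_notMem hnmem,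
        min_eq_left (by linarith), Pi.one_apply]
      ring
    · have hnmem : x ∉ Set.Ico ((i : ℝ)) ((i : ℝ) + 1 / 2) := by
        rintro ⟨a, b⟩; linarith
      have hmem : x ∈ Set.Ico ((i : ℝ) + 1 / 2) ((i : ℝ) + 1) := ⟨hc, h2⟩
      rw [Set.indicator_of_mem hmem, Set.indicator_of_notMem hnmem,
        min_eq_right (by linarith)]
      have : (x - ((i : ℝ) + 1)) ^ (2 * (i + 1)) = ((i : ℝ) + 1 - x) ^ (2 * (i + 1)) := by
        rw [show x - ((i : ℝ) + 1) = -((i : ℝ) + 1 - x) by ring, Even.neg_pow (even_two_mul _)]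
      rw [this, Pi.one_apply]; ring

noncomputable def gPoly (i : ℕ) : ℝ → ℝ := fun x =>
  ((2 : ℝ) ^ (2 * (i + 1)) / (i + 1 : ℝ)) * (min (x - i) ((i : ℝ) + 1 - x)) ^ (2 * (i + 1))

lemma gPoly_cont (i : ℕ) : Continuous (gPoly i) :=
  continuous_const.mul (((continuous_id.sub continuous_const).min
    (continuous_const.sub continuous_id)).pow _)

lemma gCounter_eq_gPoly (i : ℕ) (x : ℝ) (hx : x ∈ Set.Icc (i : ℝ) ((i : ℝ) + 1)) :
    gCounter x = gPoly i x := gCounter_eq_min i x hx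

lemma pow_half_mul (i : ℕ) :
    ((2 : ℝ) ^ (2 * (i + 1)) / (i + 1 : ℝ)) * ((1:ℝ)/2) ^ (2 * (i + 1)) = 1 / (i + 1 : ℝ) := by
  have h : ((2 : ℝ) ^ (2 * (i + 1))) * ((1:ℝ)/2) ^ (2 * (i + 1)) = 1 := by
    rw [← mul_pow]; norm_num
  field_simp at h ⊢
  linarith [h]

lemma gCounter_of_neg {x : ℝ} (hx : x < 0) : gCounter x = 0 := if_pos hx

lemma gCounter_of_nonpos {x : ℝ} (hx : x ≤ 0) : gCounter x = 0 := by
  rcases lt_or_eq_of_le hx with h | rfl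
  · exact gCounter_of_neg h
  · rw [gCounter_eq_min 0 0 (by norm_num)]
    norm_num

lemma gPoly_nonneg (i : ℕ) (x : ℝ) (hx : x ∈ Set.Icc (i : ℝ) ((i : ℝ) + 1)) :
    0 ≤ gPoly i x := by
  obtain ⟨h1, h2⟩ := hx
  exact mul_nonneg (by positivity) (pow_nonneg (le_min (by linarith) (by linarith)) _)

lemma gPoly_le (i : ℕ) (x : ℝ) (hx : x ∈ Set.Icc (i : ℝ) ((i : ℝ) + 1)) :
    gPoly i x ≤ 1 / (i + 1 : ℝ) := by
  obtain ⟨h1, h2⟩ := hx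
  have hmin0 : 0 ≤ min (x - i) ((i : ℝ) + 1 - x) := le_min (by linarith) (by linarith)
  have hminh : min (x - i) ((i : ℝ) + 1 - x) ≤ 1/2 := by
    rcases le_or_gt (x - i) (1/2) with h | h
    · exact (min_le_left _ _).trans h
    · exact (min_le_right _ _).trans (by linarith)
  calc gPoly i x ≤ ((2 : ℝ) ^ (2 * (i + 1)) / (i + 1 : ℝ)) * ((1:ℝ)/2) ^ (2 * (i + 1)) :=
        mul_le_mul_of_nonneg_left (pow_le_pow_left₀ hmin0 hminh _) (by positivity)
    _ = 1 / (i + 1 : ℝ) := pow_half_mul i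

lemma gCounter_mem_Icc_floor {x : ℝ} (hx : 0 ≤ x) :
    x ∈ Set.Icc ((⌊x⌋₊ : ℕ) : ℝ) (((⌊x⌋₊ : ℕ) : ℝ) + 1) :=
  ⟨Nat.floor_le hx, (Nat.lt_floor_add_one x).le⟩

lemma gCounter_nonneg (x : ℝ) : 0 ≤ gCounter x := by
  rcases lt_or_ge x 0 with h | h
  · rw [gCounter_of_neg h]
  · rw [gCounter_eq_gPoly ⌊x⌋₊ x (gCounter_mem_Icc_floor h)]
    exact gPoly_nonneg _ _ (gCounter_mem_Icc_floor h)

lemma gCounter_le_one (x : ℝ) : gCounter x ≤ 1 := by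
  rcases lt_or_ge x 0 with h | h
  · rw [gCounter_of_neg h]; norm_num
  · rw [gCounter_eq_gPoly ⌊x⌋₊ x (gCounter_mem_Icc_floor h)]
    refine (gPoly_le _ _ (gCounter_mem_Icc_floor h)).trans ?_
    rw [div_le_one (by positivity)]
    have : (0:ℝ) ≤ (⌊x⌋₊ : ℝ) := Nat.cast_nonneg _
    linarith

lemma gCounter_continuous : Continuous gCounter := by
  rw [continuous_iff_continuousAt]
  intro x
  rcases lt_or_ge x 0 with hx | hx
  · have h : gCounter =ᶠ[𝓝 x] (fun _ => (0:ℝ)) :=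
      eventually_of_mem (Iio_mem_nhds hx) (fun y hy => gCounter_of_neg hy)
    exact continuousAt_const.congr h.symm
  · set n := ⌊x⌋₊ with hn
    have h1 : (n : ℝ) ≤ x := Nat.floor_le hx
    have h2 : x < (n : ℝ) + 1 := Nat.lt_floor_add_one x
    rcases eq_or_lt_of_le h1 with heq | hlt
    · -- x = n : a natural number; use left/right continuity
      rw [continuousAt_iff_continuous_left_right]
      constructor
      · -- left
        rcases Nat.eq_zero_or_pos n with h0 | h0
        · have hxz : x = 0 := by rw [← heq, h0]; norm_num
          have h : ∀ y ∈ Set.Iic x, gCounter y = (fun _ => (0:ℝ)) y := fun y hy =>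
            gCounter_of_nonpos (by simpa [hxz] using hy)
          exact (continuousAt_const.continuousWithinAt).congr h (h x (by simp))
        · obtain ⟨k, hk⟩ : ∃ k, n = k + 1 := ⟨n - 1, (Nat.succ_pred_eq_of_pos h0).symm⟩
          have heq' : (k : ℝ) + 1 = x := by
            rw [← heq, hk]; push_cast; ring
          have hmem : Set.Icc ((k:ℝ)) ((k:ℝ)+1) ∈ 𝓝[≤] x := by
            rw [← heq']
            exact Icc_mem_nhdsLE (by linarith)
          refine ContinuousWithinAt.mono_of_mem_nhdsWithin ?_ hmem
          refine ((gPoly_cont k).continuousAt.continuousWithinAt).congr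
            (fun y hy => gCounter_eq_gPoly k y hy) (gCounter_eq_gPoly k x ?_)
          rw [← heq']; constructor <;> norm_num
      · -- right
        have hmem : Set.Icc ((n:ℝ)) ((n:ℝ)+1) ∈ 𝓝[≥] x := by
          refine mem_of_superset (Ico_mem_nhdsGE_of_mem ⟨h1, h2⟩) Set.Ico_subset_Icc_self
        refine ContinuousWithinAt.mono_of_mem_nhdsWithin ?_ hmem
        exact ((gPoly_cont n).continuousAt.continuousWithinAt).congr
          (fun y hy => gCounter_eq_gPoly n y hy) (gCounter_eq_gPoly n x ⟨h1, h2.le⟩)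
    · -- n < x : interior
      have hopen : Set.Ioo ((n:ℝ)) ((n:ℝ)+1) ∈ 𝓝 x := Ioo_mem_nhds hlt h2
      have h : gCounter =ᶠ[𝓝 x] gPoly n :=
        eventually_of_mem hopen (fun y hy => gCounter_eq_gPoly n y ⟨hy.1.le, hy.2.le⟩)
      exact ((gPoly_cont n).continuousAt).congr h.symm

lemma gCounter_le_floor_inv {x : ℝ} (hx : 0 ≤ x) : gCounter x ≤ 1 / ((⌊x⌋₊ : ℝ) + 1) := by
  rw [gCounter_eq_gPoly ⌊x⌋₊ x (gCounter_mem_Icc_floor hx)]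
  exact gPoly_le _ _ (gCounter_mem_Icc_floor hx)

lemma gCounter_tendsto : Tendsto gCounter (cocompact ℝ) (𝓝 0) := by
  rw [cocompact_eq_atBot_atTop, tendsto_sup]
  constructor
  · apply tendsto_const_nhds.congr'
    filter_upwards [eventually_le_atBot (-1 : ℝ)] with y hy
    exact (gCounter_of_neg (by linarith)).symm
  · apply tendsto_of_tendsto_of_tendsto_of_le_of_le' tendsto_const_nhds tendsto_inv_atTop_zero
    · exact Eventually.of_forall gCounter_nonneg
    · filter_upwards [eventually_ge_atTop (1 : ℝ)] with y hy
      have h0 : (0:ℝ) ≤ y := by linarith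
      refine (gCounter_le_floor_inv h0).trans ?_
      rw [one_div]
      exact inv_anti₀ (by linarith) (Nat.lt_floor_add_one y).le

lemma gCounter_half (n : ℕ) : gCounter ((n : ℝ) + 1/2) = 1 / ((n : ℝ) + 1) := by
  rw [gCounter_eq_gPoly n _ (by constructor <;> norm_num)]
  unfold gPoly
  have : min ((n:ℝ) + 1/2 - n) ((n:ℝ) + 1 - ((n:ℝ) + 1/2)) = 1/2 := by
    norm_num
  rw [this, pow_half_mul]

lemma not_summable_part :
    ¬ Summable (fun y : ℤ => ⨆ x : Set.Icc (0 : ℝ) 1, |gCounter ((x : ℝ) + (y : ℝ))|) := by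
  intro h
  have h2 : Summable (fun n : ℕ =>
      ⨆ x : Set.Icc (0 : ℝ) 1, |gCounter ((x : ℝ) + ((n : ℤ) : ℝ))|) :=
    h.comp_injective Nat.cast_injective
  have h3 : Summable (fun n : ℕ => 1 / ((n : ℝ) + 1)) := by
    refine h2.of_nonneg_of_le (fun n => by positivity) (fun n => ?_)
    have hbdd : BddAbove (Set.range fun x : Set.Icc (0:ℝ) 1 => |gCounter ((x : ℝ) + ((n : ℤ) : ℝ))|) := by
      refine ⟨1, ?_⟩
      rintro _ ⟨x, rfl⟩
      dsimp only
      rw [abs_of_nonneg (gCounter_nonneg _)]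
      exact gCounter_le_one _
    have hle := le_ciSup hbdd (⟨1/2, by norm_num⟩ : Set.Icc (0:ℝ) 1)
    refine le_trans ?_ hle
    have : ((1/2 : ℝ)) + ((n : ℤ) : ℝ) = (n : ℝ) + 1/2 := by push_cast; ring
    rw [this, gCounter_half, abs_of_nonneg (by positivity)]
  have h4 : Summable (fun n : ℕ => 1 / (n : ℝ)) := by
    rw [← summable_nat_add_iff 1]
    convert h3 using 2 with n
    · rfl
    push_cast
    ring
  exact Real.not_summable_one_div_natCast h4

lemma gCounter_integral_bound (n : ℕ) :
    ∫ x in Set.Icc (n:ℝ) ((n:ℝ)+1), ‖gCounter x‖ ≤ 1 / ((n:ℝ)+1)^2 := by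
  have heq : Set.EqOn (fun x => ‖gCounter x‖) gCounter (Set.Icc (n:ℝ) ((n:ℝ)+1)) := by
    intro x _
    simp [Real.norm_eq_abs, abs_of_nonneg (gCounter_nonneg x)]
  rw [setIntegral_congr_fun measurableSet_Icc heq, integral_Icc_eq_integral_Ioc,
    ← intervalIntegral.integral_of_le (by linarith)]
  have hii : ∀ a b : ℝ, IntervalIntegrable gCounter volume a b :=
    fun a b => gCounter_continuous.intervalIntegrable a b
  rw [← intervalIntegral.integral_add_adjacent_intervals (b := (n:ℝ)+1/2) (hii _ _) (hii _ _)]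
  set c : ℝ := (2 : ℝ) ^ (2 * (n + 1)) / (n + 1 : ℝ) with hc
  have e1 : ∫ x in (n:ℝ)..((n:ℝ)+1/2), gCounter x
      = ∫ x in (n:ℝ)..((n:ℝ)+1/2), c * (x - n) ^ (2*(n+1)) := by
    apply intervalIntegral.integral_congr
    intro x hx
    rw [Set.uIcc_of_le (by linarith)] at hx
    obtain ⟨h1, h2⟩ := hx
    rw [gCounter_eq_gPoly n x ⟨h1, by linarith⟩]
    unfold gPoly
    rw [min_eq_left (by linarith)]
  have e2 : ∫ x in ((n:ℝ)+1/2)..((n:ℝ)+1), gCounter x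
      = ∫ x in ((n:ℝ)+1/2)..((n:ℝ)+1), c * (x - ((n:ℝ)+1)) ^ (2*(n+1)) := by
    apply intervalIntegral.integral_congr
    intro x hx
    rw [Set.uIcc_of_le (by linarith)] at hx
    obtain ⟨h1, h2⟩ := hx
    rw [gCounter_eq_gPoly n x ⟨by linarith, h2⟩]
    unfold gPoly
    rw [min_eq_right (by linarith)]
    congr 1
    rw [show x - ((n:ℝ)+1) = -(((n:ℝ)+1) - x) by ring, Even.neg_pow (even_two_mul _)]
  rw [e1, e2, intervalIntegral.integral_const_mul, intervalIntegral.integral_const_mul,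
    intervalIntegral.integral_comp_sub_right (fun x => x ^ (2*(n+1))) (n:ℝ),
    intervalIntegral.integral_comp_sub_right (fun x => x ^ (2*(n+1))) ((n:ℝ)+1),
    integral_pow, integral_pow]
  have hs1 : (n:ℝ) - n = 0 := by ring
  have hs2 : (n:ℝ)+1/2 - n = 1/2 := by ring
  have hs3 : (n:ℝ)+1/2 - ((n:ℝ)+1) = -(1/2) := by ring
  have hs4 : (n:ℝ)+1 - ((n:ℝ)+1) = 0 := by ring
  rw [hs1, hs2, hs3, hs4]
  have hodd : Odd (2*(n+1)+1) := ⟨n+1, by ring⟩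
  rw [zero_pow (by omega), Odd.neg_pow hodd]
  have hD : ((2*(n+1):ℕ):ℝ) + 1 = 2*(n:ℝ)+3 := by push_cast; ring
  rw [hD]
  have ht : c * ((((1/2:ℝ)) ^ (2*(n+1)+1) - 0) / (2*(n:ℝ)+3))
      + c * (((0:ℝ) - -(1/2:ℝ) ^ (2*(n+1)+1)) / (2*(n:ℝ)+3))
      = (c * ((1/2:ℝ)) ^ (2*(n+1))) / (2*(n:ℝ)+3) := by
    rw [pow_succ]
    ring
  rw [ht, pow_half_mul n, div_div]
  rw [div_le_div_iff₀ (by positivity) (by positivity)]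
  have hn : (0:ℝ) ≤ (n:ℝ) := Nat.cast_nonneg n
  nlinarith

lemma gCounter_integrable : Integrable gCounter := by
  rw [← integrableOn_univ]
  rw [show (Set.univ : Set ℝ) = Set.Iic 0 ∪ Set.Ici 0 from (Set.Iic_union_Ici).symm]
  apply IntegrableOn.union
  · have hEq : Set.EqOn gCounter (fun _ => (0:ℝ)) (Set.Iic 0) := fun y hy =>
      gCounter_of_nonpos hy
    exact (integrableOn_congr_fun hEq measurableSet_Iic).mpr integrableOn_zero
  · have hU : Set.Ici (0:ℝ) = ⋃ n : ℕ, Set.Icc (n:ℝ) ((n:ℝ)+1) := by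
      ext y
      simp only [Set.mem_Ici, Set.mem_iUnion, Set.mem_Icc]
      constructor
      · intro hy
        exact ⟨⌊y⌋₊, Nat.floor_le hy, (Nat.lt_floor_add_one y).le⟩
      · rintro ⟨n, h1, _⟩
        exact le_trans (Nat.cast_nonneg n) h1
    rw [hU]
    refine integrableOn_iUnion_of_summable_integral_norm
      (fun n => gCounter_continuous.integrableOn_Icc) ?_
    have hsum : Summable (fun n : ℕ => 1 / ((n:ℝ)+1)^2) := by
      have h0 : Summable (fun n : ℕ => 1 / ((n:ℝ))^2) :=
        Real.summable_one_div_nat_pow.mpr one_lt_two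
      have h1 := (summable_nat_add_iff (f := fun n : ℕ => 1 / ((n:ℝ))^2) 1).mpr h0
      convert h1 using 2 with n
      · rfl
      push_cast
      ring
    refine hsum.of_nonneg_of_le (fun n => ?_) (fun n => gCounter_integral_bound n)
    exact setIntegral_nonneg measurableSet_Icc (fun x _ => norm_nonneg _)

/-- `gCounter` is continuous, integrable and vanishes at infinity (so `gCounter ∈ C₀(ℝ)`),
yet it does not belong to Wiener's algebra `𝒲`:
`Σ_{y ∈ ℤ} sup_{x ∈ [0,1]} |g(x + y)| = ∞`. -/
theorem stmt_14 :
    Continuous gCounter ∧ Integrable gCounter ∧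
      Tendsto gCounter (cocompact ℝ) (𝓝 0) ∧
      ¬ Summable (fun y : ℤ => ⨆ x : Set.Icc (0 : ℝ) 1, |gCounter ((x : ℝ) + (y : ℝ))|) := by
  exact ⟨gCounter_continuous, gCounter_integrable, gCounter_tendsto, not_summable_part⟩
end
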